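/- arXiv:2012.14521 — 6 statements merged into one kernel-verified Lean document; each statement's English description precedes it below -/
import Mathlib

section
/- Let G ~ N(0, I_N) be a standard Gaussian vector in ℝ^N. Then E[‖G‖_2] ≥ √(2N/π). -/
open MeasureTheory ProbabilityTheory Real
open Set Filter
open scoped ENNReal NNReal


lemma integral_Ioi_x_exp : ∫ x in Ioi (0:ℝ), x * rexp (-x^2/2) = 1 := by
  have h := integral_Ioi_of_hasDerivAt_of_tendsto
    (f := fun x : ℝ => -rexp (-x^2/2)) (f' := fun x : ℝ => x * rexp (-x^2/2)) (a := 0)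
    ?_ ?_ ?_ ?_ (m := 0)
  · simpa using h
  · exact (Continuous.continuousWithinAt (by continuity))
  · intro x hx
    have h1 : HasDerivAt (fun x : ℝ => -x^2/2) (-x) x := by
      have := ((hasDerivAt_pow 2 x).neg).div_const 2
      simpa using this.congr_deriv (by ring)
    have h2 := (h1.exp).neg
    convert h2 using 1
    · rfl
    · ring
  · have := (integrable_mul_exp_neg_mul_sq (b := 1/2) (by norm_num)).integrableOn (s := Ioi 0)
    refine this.congr_fun (fun x _ => by ring_nf) measurableSet_Ioi
  · have : Tendsto (fun x : ℝ => rexp (-x^2/2)) atTop (nhds 0) := by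
      have h0 : Tendsto (fun x : ℝ => -x^2) atTop atBot :=
        tendsto_neg_atBot_iff.mpr (tendsto_pow_atTop (by norm_num))
      have : Tendsto (fun x : ℝ => -x^2/2) atTop atBot :=
        h0.atBot_div_const (by norm_num)
      exact Real.tendsto_exp_atBot.comp this
    simpa using this.neg

lemma abs_exp_integrable : Integrable (fun x : ℝ => |x| * rexp (-x^2/2)) := by
  have h := (integrable_mul_exp_neg_mul_sq (b := 1/2) (by norm_num)).abs
  refine h.congr (ae_of_all _ fun x => ?_)
  show |x * rexp (-(1/2) * x^2)| = |x| * rexp (-x^2/2)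
  rw [abs_mul, abs_of_pos (exp_pos _)]
  ring_nf

lemma integral_abs_exp : ∫ x : ℝ, |x| * rexp (-x^2/2) = 2 := by
  have h := integral_comp_abs (f := fun y : ℝ => y * rexp (-y^2/2))
  simp only [sq_abs] at h
  rw [h, integral_Ioi_x_exp]; norm_num

lemma gaussian_density (f : ℝ → ℝ) :
    ∫ x, f x ∂(gaussianReal 0 1) = ∫ x, gaussianPDFReal 0 1 x * f x := by
  rw [gaussianReal_of_var_ne_zero 0 one_ne_zero]
  have hd : (gaussianPDF 0 1) = fun x => ((gaussianPDFReal 0 1 x).toNNReal : ℝ≥0∞) := by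
    funext x; rfl
  rw [hd, integral_withDensity_eq_integral_smul
    ((measurable_gaussianPDFReal 0 1).real_toNNReal) f]
  congr 1; funext x
  rw [NNReal.smul_def, Real.coe_toNNReal _ (gaussianPDFReal_nonneg 0 1 x), smul_eq_mul]

lemma integrable_abs_gaussian : Integrable (fun x : ℝ => |x|) (gaussianReal 0 1) := by
  rw [gaussianReal_of_var_ne_zero 0 one_ne_zero]
  have hd : (gaussianPDF 0 1) = fun x => ((gaussianPDFReal 0 1 x).toNNReal : ℝ≥0∞) := by
    funext x; rfl
  rw [hd, integrable_withDensity_iff_integrable_smul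
    ((measurable_gaussianPDFReal 0 1).real_toNNReal)]
  have : Integrable (fun x : ℝ => (Real.sqrt (2 * π))⁻¹ * (|x| * rexp (-x^2/2))) :=
    abs_exp_integrable.const_mul _
  refine this.congr (ae_of_all _ fun x => ?_)
  show (√(2 * π))⁻¹ * (|x| * rexp (-x ^ 2 / 2)) = (gaussianPDFReal 0 1 x).toNNReal • |x|
  rw [NNReal.smul_def, Real.coe_toNNReal _ (gaussianPDFReal_nonneg 0 1 x), smul_eq_mul,
    gaussianPDFReal]
  push_cast
  ring_nf

lemma integral_abs_gaussian : ∫ x, |x| ∂(gaussianReal 0 1) = Real.sqrt (2 / π) := by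
  rw [gaussian_density]
  have : ∀ x : ℝ, gaussianPDFReal 0 1 x * |x| =
      (Real.sqrt (2 * π))⁻¹ * (|x| * rexp (-x^2/2)) := by
    intro x; rw [gaussianPDFReal]; push_cast; ring_nf
  simp_rw [this]
  rw [integral_const_mul, integral_abs_exp]
  have h2π : (0:ℝ) < 2*π := by positivity
  have hsq : ((Real.sqrt (2*π))⁻¹ * 2)^2 = 2/π := by
    rw [mul_pow, inv_pow, Real.sq_sqrt h2π.le]
    field_simp
  rw [← hsq, Real.sqrt_sq (by positivity)]

lemma pi_map_eval {ι : Type*} [Fintype ι] [DecidableEq ι] {α : ι → Type*}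
    [∀ i, MeasurableSpace (α i)] (μ : ∀ i, Measure (α i)) [∀ i, IsProbabilityMeasure (μ i)]
    (i : ι) : (Measure.pi μ).map (Function.eval i) = μ i := by
  ext s hs
  rw [Measure.map_apply (measurable_pi_apply i) hs, Set.eval_preimage, Measure.pi_pi]
  rw [Finset.prod_eq_single i (fun j _ hj => by
    rw [Function.update_of_ne hj]; exact measure_univ) (by simp)]
  rw [Function.update_self]

lemma integral_eval {N : ℕ} (i : Fin N) (f : ℝ → ℝ) (hf : Measurable f) :
    ∫ x, f (x i) ∂(Measure.pi fun _ : Fin N => gaussianReal 0 1)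
      = ∫ y, f y ∂(gaussianReal 0 1) := by
  conv_rhs => rw [← pi_map_eval (fun _ : Fin N => gaussianReal 0 1) i]
  exact (integral_map (measurable_pi_apply i).aemeasurable hf.aestronglyMeasurable).symm

lemma integrable_eval {N : ℕ} (i : Fin N) (f : ℝ → ℝ) (hf : Measurable f)
    (hfi : Integrable f (gaussianReal 0 1)) :
    Integrable (fun x => f (x i)) (Measure.pi fun _ : Fin N => gaussianReal 0 1) := by
  rw [← pi_map_eval (fun _ : Fin N => gaussianReal 0 1) i] at hfi
  exact hfi.comp_measurable (measurable_pi_apply i)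

/-- If `G ~ N(0, I_N)` is a standard Gaussian vector in `ℝ^N`, then
`E[‖G‖₂] ≥ √(2N/π)`. -/
theorem expectation_norm_gaussian_ge (N : ℕ) :
    Real.sqrt (2 * N / Real.pi)
      ≤ ∫ x, Real.sqrt (∑ i, x i ^ 2)
          ∂(Measure.pi fun _ : Fin N => gaussianReal 0 1) := by
  set μ := Measure.pi fun _ : Fin N => gaussianReal 0 1 with hμ
  set f : (Fin N → ℝ) → ℝ := fun x => Real.sqrt (∑ i, x i ^ 2) with hfdef
  set g : (Fin N → ℝ) → ℝ := fun x => ∑ i, |x i| with hgdef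
  have hgnn : ∀ x, 0 ≤ g x := fun x => Finset.sum_nonneg fun i _ => abs_nonneg _
  have hfg : ∀ x, f x ≤ g x := by
    intro x
    rw [hfdef, hgdef]
    simp only
    rw [← Real.sqrt_sq (Finset.sum_nonneg fun i _ => abs_nonneg (x i))]
    apply Real.sqrt_le_sqrt
    have := Finset.sum_sq_le_sq_sum_of_nonneg
      (s := Finset.univ) (f := fun i => |x i|) (fun i _ => abs_nonneg _)
    simpa [sq_abs] using this
  have hgf : ∀ x, g x ≤ Real.sqrt N * f x := by
    intro x
    have h1 : (g x)^2 ≤ (N : ℝ) * ∑ i, x i ^ 2 := by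
      have := sq_sum_le_card_mul_sum_sq (s := Finset.univ) (f := fun i => |x i|)
      simpa [sq_abs] using this
    calc g x = Real.sqrt ((g x)^2) := (Real.sqrt_sq (hgnn x)).symm
      _ ≤ Real.sqrt ((N : ℝ) * ∑ i, x i ^ 2) := Real.sqrt_le_sqrt h1
      _ = Real.sqrt N * f x := Real.sqrt_mul (Nat.cast_nonneg N) _
  have habs : Measurable fun y : ℝ => |y| := continuous_abs.measurable
  have hgint : Integrable g μ :=
    integrable_finset_sum _ fun i _ => integrable_eval i _ habs integrable_abs_gaussian
  have hfmeas : Continuous f := by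
    apply Real.continuous_sqrt.comp
    exact continuous_finset_sum _ fun i _ => (continuous_apply i).pow 2
  have hfint : Integrable f μ := by
    refine hgint.mono' hfmeas.aestronglyMeasurable (ae_of_all _ fun x => ?_)
    rw [Real.norm_eq_abs, abs_of_nonneg (Real.sqrt_nonneg _)]
    exact hfg x
  have hg : ∫ x, g x ∂μ = (N : ℝ) * Real.sqrt (2 / π) := by
    rw [hgdef]
    rw [integral_finset_sum _ fun i _ => integrable_eval i _ habs integrable_abs_gaussian]
    have : ∀ i : Fin N, ∫ x, |x i| ∂μ = Real.sqrt (2 / π) := fun i => by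
      rw [hμ, integral_eval i _ habs, integral_abs_gaussian]
    simp_rw [← hμ, this, Finset.sum_const, Finset.card_univ, Fintype.card_fin, nsmul_eq_mul]
  have key : (N : ℝ) * Real.sqrt (2 / π) ≤ Real.sqrt N * ∫ x, f x ∂μ := by
    rw [← hg, ← integral_const_mul]
    exact integral_mono hgint (hfint.const_mul _) hgf
  rcases Nat.eq_zero_or_pos N with hN | hN
  · subst hN
    simp only [Nat.cast_zero, mul_zero, zero_div, Real.sqrt_zero]
    exact integral_nonneg fun x => Real.sqrt_nonneg _
  · have hsN : (0 : ℝ) < Real.sqrt N := Real.sqrt_pos.mpr (by exact_mod_cast hN)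
    have heq : Real.sqrt (2 * N / π) = Real.sqrt N * Real.sqrt (2 / π) := by
      rw [show 2 * (N : ℝ) / π = N * (2 / π) by ring, Real.sqrt_mul (Nat.cast_nonneg N)]
    rw [heq]
    have : Real.sqrt N * (Real.sqrt N * Real.sqrt (2 / π)) ≤ Real.sqrt N * ∫ x, f x ∂μ := by
      rw [← mul_assoc, Real.mul_self_sqrt (Nat.cast_nonneg N)]
      exact key
    exact le_of_mul_le_mul_left this hsN
end

section
/- For any set T ⊆ ℝ^N, letting w₁ := sup_{ε>0} ε √(log P_ε(T)) and w₂ := sup_{ε>0} ε log P_ε(T) / √N (packing numbers with respect to the Euclidean metric), one has w₂ ≤ (1 + 4e^{-1})√(1 + log 4) · w₁. -/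
open MeasureTheory

/-- The `ε`-packing number of `T` under the Euclidean metric: the largest cardinality
of a subset of `T` with pairwise distances `> ε`. -/
noncomputable def packingNumber {N : ℕ} (T : Set (EuclideanSpace ℝ (Fin N))) (ε : ℝ) : ℕ :=
  sSup {n : ℕ | ∃ A : Finset (EuclideanSpace ℝ (Fin N)),
    ↑A ⊆ T ∧ (A : Set (EuclideanSpace ℝ (Fin N))).Pairwise (fun x y => ε < dist x y) ∧
    A.card = n}

section Aux

open Metric ENNReal

def packSet {N : ℕ} (T : Set (EuclideanSpace ℝ (Fin N))) (ε : ℝ) : Set ℕ :=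
  {n : ℕ | ∃ A : Finset (EuclideanSpace ℝ (Fin N)),
    ↑A ⊆ T ∧ (A : Set (EuclideanSpace ℝ (Fin N))).Pairwise (fun x y => ε < dist x y) ∧
    A.card = n}

lemma packingNumber_def {N : ℕ} (T : Set (EuclideanSpace ℝ (Fin N))) (ε : ℝ) :
    packingNumber T ε = sSup (packSet T ε) := rfl

lemma packSet_nonempty {N : ℕ} (T : Set (EuclideanSpace ℝ (Fin N))) (ε : ℝ) :
    (packSet T ε).Nonempty :=
  ⟨0, ∅, by simp, by simp, rfl⟩

lemma packSet_mono {N : ℕ} (T : Set (EuclideanSpace ℝ (Fin N))) {ε ε' : ℝ} (h : ε ≤ ε') :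
    packSet T ε' ⊆ packSet T ε := by
  rintro n ⟨A, hA, hsep, hcard⟩
  exact ⟨A, hA, fun x hx y hy hxy => lt_of_le_of_lt h (hsep hx hy hxy), hcard⟩

/-- if `T` is unbounded, all packing sets are unbounded -/
lemma packSet_not_bddAbove {N : ℕ} {T : Set (EuclideanSpace ℝ (Fin N))} {ε : ℝ}
    (hε : 0 < ε) (hT : ¬Bornology.IsBounded T) : ¬BddAbove (packSet T ε) := by
  have key : ∀ n : ℕ, ∃ A : Finset (EuclideanSpace ℝ (Fin N)),
      ↑A ⊆ T ∧ (A : Set (EuclideanSpace ℝ (Fin N))).Pairwise (fun x y => ε < dist x y) ∧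
      A.card = n := by
    intro n
    classical
    induction n with
    | zero => exact ⟨∅, by simp, by simp, rfl⟩
    | succ n ih =>
      obtain ⟨A, hA, hsep, hcard⟩ := ih
      have hnb : ¬ T ⊆ closedBall 0 (ε + ∑ b ∈ A, dist b 0) := by
        intro hsub
        exact hT ((isBounded_closedBall).subset hsub)
      obtain ⟨t, htT, htB⟩ := Set.not_subset.1 hnb
      rw [mem_closedBall, not_le] at htB
      have hfar : ∀ a ∈ A, ε < dist t a := by
        intro a ha
        have h1 : dist a 0 ≤ ∑ b ∈ A, dist b 0 :=
          Finset.single_le_sum (f := fun b => dist b 0) (fun b _ => dist_nonneg) ha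
        have h2 : dist t 0 ≤ dist t a + dist a 0 := dist_triangle t a 0
        linarith
      have htA : t ∉ A := by
        intro htA
        have := hfar t htA
        simp at this; linarith
      refine ⟨insert t A, ?_, ?_, by rw [Finset.card_insert_of_notMem htA, hcard]⟩
      · rw [Finset.coe_insert]
        exact Set.insert_subset htT hA
      · rw [Finset.coe_insert]
        refine (haveI : Std.Symm (fun x y : EuclideanSpace ℝ (Fin N) => ε < dist x y) := ⟨?_⟩; Set.pairwise_insert_of_symm).2 ⟨hsep, fun a ha _ => hfar a ha⟩
        intro x y hxy
        rwa [dist_comm]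
  intro ⟨b, hb⟩
  obtain ⟨A, _, _, hcard⟩ := key (b + 1)
  have := hb (Set.mem_setOf.2 ⟨A, ‹_›, ‹_›, hcard⟩)
  omega

/-- volume bound for a separated set inside a ball -/
lemma sep_card_le_vol {N : ℕ} (hN : 0 < N) {ε R : ℝ} (hε : 0 < ε) (hR : 0 ≤ R)
    (x : EuclideanSpace ℝ (Fin N)) (B : Finset (EuclideanSpace ℝ (Fin N)))
    (hB : ↑B ⊆ closedBall x R)
    (hsep : (B : Set (EuclideanSpace ℝ (Fin N))).Pairwise (fun a b => ε < dist a b)) :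
    (B.card : ℝ) * (ε / 2) ^ N ≤ (R + ε / 2) ^ N := by
  haveI : Nonempty (Fin N) := ⟨⟨0, hN⟩⟩
  set μ : Measure (EuclideanSpace ℝ (Fin N)) := volume with hμ
  have hdisj : (B : Set (EuclideanSpace ℝ (Fin N))).PairwiseDisjoint
      (fun b => ball b (ε / 2)) := by
    intro a ha b hb hab
    refine Set.disjoint_left.2 fun z hza hzb => ?_
    have h1 := hsep ha hb hab
    have : dist a b < ε := by
      calc dist a b ≤ dist a z + dist z b := dist_triangle a z b
        _ < ε / 2 + ε / 2 := by
            rw [mem_ball] at hza hzb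
            rw [dist_comm a z]; linarith
        _ = ε := by ring
    linarith
  have hsub : ∀ b ∈ B, ball b (ε / 2) ⊆ ball x (R + ε / 2) := by
    intro b hb z hz
    have hbx : dist b x ≤ R := hB hb
    rw [mem_ball] at hz ⊢
    calc dist z x ≤ dist z b + dist b x := dist_triangle z b x
      _ < ε / 2 + R := by linarith
      _ = R + ε / 2 := by ring
  have hmeas := measure_biUnion_finset (μ := μ) hdisj
    (fun b _ => measurableSet_ball (x := b) (ε := ε/2))
  have hball : ∀ (c : EuclideanSpace ℝ (Fin N)) (r : ℝ), 0 ≤ r →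
      μ (ball c r) = ENNReal.ofReal (r ^ N) * μ (ball 0 1) := by
    intro c r hr
    rw [hμ, Measure.addHaar_ball volume c hr, finrank_euclideanSpace_fin]
  have hUsub : (⋃ b ∈ B, ball b (ε / 2)) ⊆ ball x (R + ε / 2) :=
    Set.iUnion₂_subset hsub
  have hle : (B.card : ℝ≥0∞) * ENNReal.ofReal ((ε/2) ^ N) * μ (ball 0 1)
      ≤ ENNReal.ofReal ((R + ε/2) ^ N) * μ (ball 0 1) := by
    calc (B.card : ℝ≥0∞) * ENNReal.ofReal ((ε/2) ^ N) * μ (ball 0 1)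
        = ∑ b ∈ B, μ (ball b (ε/2)) := by
          rw [Finset.sum_congr rfl (fun b _ => hball b (ε/2) (by linarith)),
            Finset.sum_const, nsmul_eq_mul, mul_assoc]
      _ = μ (⋃ b ∈ B, ball b (ε / 2)) := hmeas.symm
      _ ≤ μ (ball x (R + ε/2)) := measure_mono hUsub
      _ = ENNReal.ofReal ((R + ε/2) ^ N) * μ (ball 0 1) := hball x _ (by linarith)
  have hpos : μ (ball 0 1) ≠ 0 := (measure_ball_pos μ 0 one_pos).ne'
  have htop : μ (ball 0 1) ≠ ⊤ := measure_ball_lt_top.ne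
  have hle2 : (B.card : ℝ≥0∞) * ENNReal.ofReal ((ε/2) ^ N)
      ≤ ENNReal.ofReal ((R + ε/2) ^ N) :=
    (ENNReal.mul_le_mul_iff_left hpos htop).1 hle
  have : ENNReal.ofReal ((B.card : ℝ) * (ε/2) ^ N) ≤ ENNReal.ofReal ((R + ε/2) ^ N) := by
    rw [ENNReal.ofReal_mul (by positivity)]
    rwa [ENNReal.ofReal_natCast]
  exact (ENNReal.ofReal_le_ofReal_iff (by positivity)).1 this

lemma sep_card_le {N : ℕ} (hN : 0 < N) {ε R : ℝ} (hε : 0 < ε) (hR : 0 ≤ R)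
    (x : EuclideanSpace ℝ (Fin N)) (B : Finset (EuclideanSpace ℝ (Fin N)))
    (hB : ↑B ⊆ closedBall x R)
    (hsep : (B : Set (EuclideanSpace ℝ (Fin N))).Pairwise (fun a b => ε < dist a b)) :
    (B.card : ℝ) ≤ ((2 * R + ε) / ε) ^ N := by
  have h := sep_card_le_vol hN hε hR x B hB hsep
  have hpow : (0:ℝ) < (ε / 2) ^ N := by positivity
  rw [show ((2 * R + ε) / ε : ℝ) = (R + ε / 2) / (ε / 2) by field_simp,
    div_pow]
  rw [le_div_iff₀ hpow]
  exact h

/-- comparison of packing numbers at two scales -/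
lemma packing_compare {N : ℕ} (hN : 0 < N) {T : Set (EuclideanSpace ℝ (Fin N))}
    {ε ε' : ℝ} (hε : 0 < ε) (hεε' : ε ≤ ε')
    (hbdd : BddAbove (packSet T ε)) :
    (packingNumber T ε : ℝ) ≤ (packingNumber T ε' : ℝ) * ((2 * ε' + ε) / ε) ^ N := by
  classical
  have hbdd' : BddAbove (packSet T ε') := hbdd.mono (packSet_mono T hεε')
  obtain ⟨A, hAT, hAsep, hAcard⟩ := Nat.sSup_mem (packSet_nonempty T ε) hbdd
  obtain ⟨A', hA'T, hA'sep, hA'card⟩ := Nat.sSup_mem (packSet_nonempty T ε') hbdd'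
  have hmax : ∀ t ∈ T, ∃ a' ∈ A', dist t a' ≤ ε' := by
    intro t htT
    by_contra hcon
    push_neg at hcon
    have htA' : t ∉ A' := fun h => by
      have := hcon t h; simp at this; linarith
    have hmem : (A'.card + 1) ∈ packSet T ε' := by
      refine ⟨insert t A', ?_, ?_, Finset.card_insert_of_notMem htA'⟩
      · rw [Finset.coe_insert]; exact Set.insert_subset htT hA'T
      · rw [Finset.coe_insert]
        refine (haveI : Std.Symm (fun x y : EuclideanSpace ℝ (Fin N) => ε' < dist x y) := ⟨?_⟩; Set.pairwise_insert_of_symm).2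
          ⟨hA'sep, fun a ha _ => hcon a ha⟩
        intro x y hxy; rwa [dist_comm]
    have := le_csSup hbdd' hmem
    omega
  set φ : EuclideanSpace ℝ (Fin N) → EuclideanSpace ℝ (Fin N) :=
    fun t => if h : ∃ a' ∈ A', dist t a' ≤ ε' then h.choose else t with hφ
  have hφA : ∀ a ∈ A, φ a ∈ A' ∧ dist a (φ a) ≤ ε' := by
    intro a ha
    have h : ∃ a' ∈ A', dist a a' ≤ ε' := hmax a (hAT ha)
    simp only [hφ, dif_pos h]
    exact ⟨h.choose_spec.1, h.choose_spec.2⟩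
  have hcard : A.card = ∑ b ∈ A', (A.filter (fun a => φ a = b)).card :=
    Finset.card_eq_sum_card_fiberwise (fun a ha => (hφA a ha).1)
  have hfiber : ∀ b ∈ A', ((A.filter (fun a => φ a = b)).card : ℝ)
      ≤ ((2 * ε' + ε) / ε) ^ N := by
    intro b hb
    refine sep_card_le hN hε (le_trans hε.le hεε') b _ ?_ ?_
    · intro a ha
      simp only [Finset.coe_filter, Set.mem_setOf_eq] at ha
      rw [mem_closedBall, ← ha.2]
      exact (hφA a ha.1).2
    · refine hAsep.mono ?_
      intro a ha
      simp only [Finset.coe_filter, Set.mem_setOf_eq] at ha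
      exact ha.1
  calc (packingNumber T ε : ℝ) = (A.card : ℝ) := by rw [packingNumber_def, ← hAcard]
    _ = ∑ b ∈ A', ((A.filter (fun a => φ a = b)).card : ℝ) := by
        rw [hcard]; push_cast; ring
    _ ≤ ∑ b ∈ A', ((2 * ε' + ε) / ε) ^ N := Finset.sum_le_sum hfiber
    _ = (A'.card : ℝ) * ((2 * ε' + ε) / ε) ^ N := by
        rw [Finset.sum_const, nsmul_eq_mul]
    _ = (packingNumber T ε' : ℝ) * ((2 * ε' + ε) / ε) ^ N := by
        rw [packingNumber_def, ← hA'card]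

lemma log_le_div_e {z : ℝ} (hz : 0 < z) : Real.log z ≤ z * Real.exp (-1) := by
  have h1 : Real.log (z * Real.exp (-1)) ≤ z * Real.exp (-1) - 1 :=
    Real.log_le_sub_one_of_pos (by positivity)
  rw [Real.log_mul hz.ne' (Real.exp_ne_zero _), Real.log_exp] at h1
  linarith

end Aux

set_option maxHeartbeats 2000000 in
/-- For `T ⊆ ℝ^N`, with `w₁ := sup_{ε>0} ε √(log P_ε(T))` and
`w₂ := sup_{ε>0} ε log P_ε(T) / √N`, one has
`w₂ ≤ (1 + 4e⁻¹) √(1 + log 4) · w₁`. -/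
theorem dimensional_sudakov_functionals_comparison
    (N : ℕ) (hN : 0 < N) (T : Set (EuclideanSpace ℝ (Fin N)))
    (w₁ w₂ : ℝ)
    (hw₁ : w₁ = ⨆ ε : {ε : ℝ // 0 < ε},
      (ε : ℝ) * Real.sqrt (Real.log (packingNumber T ε)))
    (hw₂ : w₂ = ⨆ ε : {ε : ℝ // 0 < ε},
      (ε : ℝ) * Real.log (packingNumber T ε) / Real.sqrt N) :
    w₂ ≤ (1 + 4 * Real.exp (-1)) * Real.sqrt (1 + Real.log 4) * w₁ := by
  set F : {ε : ℝ // 0 < ε} → ℝ :=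
    fun ε => (ε : ℝ) * Real.sqrt (Real.log (packingNumber T ε)) with hF
  set G : {ε : ℝ // 0 < ε} → ℝ :=
    fun ε => (ε : ℝ) * Real.log (packingNumber T ε) / Real.sqrt N with hG
  have hsqN : (0:ℝ) < Real.sqrt N := Real.sqrt_pos.2 (by exact_mod_cast hN)
  have hFnn : ∀ ε, 0 ≤ F ε := fun ε =>
    mul_nonneg ε.2.le (Real.sqrt_nonneg _)
  have hGnn : ∀ ε, 0 ≤ G ε := fun ε =>
    div_nonneg (mul_nonneg ε.2.le (Real.log_natCast_nonneg _)) (Real.sqrt_nonneg _)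
  have hC1 : (1:ℝ) ≤ Real.sqrt (1 + Real.log 4) := by
    rw [Real.one_le_sqrt]
    have : (0:ℝ) ≤ Real.log 4 := Real.log_nonneg (by norm_num)
    linarith
  have hC0 : (1:ℝ) ≤ (1 + 4 * Real.exp (-1)) := by nlinarith [Real.exp_pos (-1:ℝ)]
  have hCC : (1:ℝ) ≤ (1 + 4 * Real.exp (-1)) * Real.sqrt (1 + Real.log 4) := by
    have := mul_le_mul hC0 hC1 (by norm_num) (by positivity)
    linarith
  by_cases hbF : BddAbove (Set.range F)
  · -- main case
    have hw₁nn : 0 ≤ w₁ := by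
      rw [hw₁]
      exact le_trans (hFnn ⟨1, one_pos⟩) (le_ciSup hbF ⟨1, one_pos⟩)
    rw [hw₂]
    refine Real.iSup_le (fun εs => ?_) (mul_nonneg (by positivity) hw₁nn)
    obtain ⟨ε, hε⟩ := εs
    show (ε : ℝ) * Real.log (packingNumber T ε) / Real.sqrt N
      ≤ (1 + 4 * Real.exp (-1)) * Real.sqrt (1 + Real.log 4) * w₁
    by_cases hbP : BddAbove (packSet T ε)
    swap
    · have : packingNumber T ε = 0 := by
        rw [packingNumber_def, csSup_of_not_bddAbove hbP, csSup_empty]; rfl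
      rw [this]
      simp only [Nat.cast_zero, Real.log_zero, mul_zero, zero_div]
      exact mul_nonneg (by positivity) hw₁nn
    set P : ℕ := packingNumber T ε with hP
    have hlogPnn : 0 ≤ Real.log P := Real.log_natCast_nonneg P
    by_cases hPe : (P : ℝ) ≤ Real.exp N
    · -- small packing number: pointwise comparison with F
      have hlogP : Real.log P ≤ N := by
        rcases Nat.eq_zero_or_pos P with h0 | h0
        · rw [h0]; simp
        · rw [Real.log_le_iff_le_exp (by exact_mod_cast h0)]; exact hPe
      have hkey : Real.log P / Real.sqrt N ≤ Real.sqrt (Real.log P) := by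
        rw [div_le_iff₀ hsqN]
        calc Real.log P = Real.sqrt (Real.log P) * Real.sqrt (Real.log P) :=
              (Real.mul_self_sqrt hlogPnn).symm
          _ ≤ Real.sqrt (Real.log P) * Real.sqrt N := by
              refine mul_le_mul_of_nonneg_left ?_ (Real.sqrt_nonneg _)
              exact Real.sqrt_le_sqrt hlogP
      have h1 : (ε : ℝ) * Real.log P / Real.sqrt N ≤ F ⟨ε, hε⟩ := by
        rw [hF, mul_div_assoc]
        exact mul_le_mul_of_nonneg_left hkey hε.le
      have h2 : F ⟨ε, hε⟩ ≤ w₁ := hw₁ ▸ le_ciSup hbF ⟨ε, hε⟩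
      calc (ε : ℝ) * Real.log P / Real.sqrt N ≤ w₁ := le_trans h1 h2
        _ ≤ (1 + 4 * Real.exp (-1)) * Real.sqrt (1 + Real.log 4) * w₁ :=
            le_mul_of_one_le_left hw₁nn hCC
    · -- large packing number: volume comparison
      push_neg at hPe
      have hTb : Bornology.IsBounded T := by
        by_contra hTb
        exact packSet_not_bddAbove hε hTb hbP
      have hPpos : 0 < P := by
        by_contra h
        push_neg at h
        interval_cases P
        · simp at hPe
          exact absurd hPe (not_lt.2 (Real.exp_nonneg _))
      have hTne : T.Nonempty := by
        obtain ⟨A, hAT, _, hAcard⟩ := Nat.sSup_mem (packSet_nonempty T ε) hbP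
        rw [← packingNumber_def, ← hP] at hAcard
        obtain ⟨a, ha⟩ := Finset.card_pos.1 (by omega : 0 < A.card)
        exact ⟨a, hAT ha⟩
      obtain ⟨t₀, ht₀⟩ := hTne
      obtain ⟨R, hR⟩ := hTb.subset_closedBall t₀
      set B : Set ℝ := {δ : ℝ | 0 < δ ∧ Real.exp N < (packingNumber T δ : ℝ)} with hB
      have hεB : ε ∈ B := ⟨hε, hPe⟩
      have hBbdd : BddAbove B := by
        refine ⟨2 * |R| + 1, fun δ hδ => ?_⟩
        by_contra hcon
        push_neg at hcon
        have hsmall : ∀ n ∈ packSet T δ, n ≤ 1 := by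
          rintro n ⟨A, hAT, hsep, hcard⟩
          by_contra hn
          push_neg at hn
          obtain ⟨a, ha, b, hb, hab⟩ := Finset.one_lt_card.1 (hcard ▸ hn)
          have h1 : dist a t₀ ≤ R := hR (hAT ha)
          have h2 : dist b t₀ ≤ R := hR (hAT hb)
          have h3 : δ < dist a b := hsep ha hb hab
          have h4 : dist a b ≤ dist a t₀ + dist t₀ b := dist_triangle a t₀ b
          rw [dist_comm t₀ b] at h4
          have hRa : R ≤ |R| := le_abs_self R
          linarith
        have hle1 : (packingNumber T δ : ℝ) ≤ 1 := by
          have := csSup_le (packSet_nonempty T δ) hsmall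
          rw [← packingNumber_def] at this
          exact_mod_cast this
        have : (1:ℝ) ≤ Real.exp N := Real.one_le_exp (by positivity)
        have := hδ.2
        linarith
      set ε₀ : ℝ := sSup B with hε₀
      have hεε₀ : ε ≤ ε₀ := le_csSup hBbdd hεB
      have hε₀pos : 0 < ε₀ := lt_of_lt_of_le hε hεε₀
      -- √N · ε₀ ≤ w₁
      have hw₁bar : Real.sqrt N * ε₀ ≤ w₁ := by
        have hδw : ∀ δ ∈ B, δ ≤ w₁ / Real.sqrt N := by
          rintro δ ⟨hδ0, hδP⟩
          have hlogδ : (N : ℝ) ≤ Real.log (packingNumber T δ) := by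
            have hPδ : (0:ℝ) < (packingNumber T δ : ℝ) :=
              lt_trans (Real.exp_pos _) hδP
            exact ((Real.lt_log_iff_exp_lt hPδ).2 hδP).le
          have h5 : Real.sqrt N ≤ Real.sqrt (Real.log (packingNumber T δ)) :=
            Real.sqrt_le_sqrt hlogδ
          have h6 : δ * Real.sqrt N ≤ F ⟨δ, hδ0⟩ :=
            mul_le_mul_of_nonneg_left h5 hδ0.le
          have h7 : F ⟨δ, hδ0⟩ ≤ w₁ := hw₁ ▸ le_ciSup hbF ⟨δ, hδ0⟩
          rw [le_div_iff₀ hsqN]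
          linarith
        have := csSup_le ⟨ε, hεB⟩ hδw
        rw [← hε₀] at this
        rw [mul_comm, ← le_div_iff₀ hsqN]
        exact this
      -- choose ε' slightly above ε₀
      set c : ℝ := (1 + 4 * Real.exp (-1)) / (1 + 3 * Real.exp (-1)) with hc
      have hexp : (0:ℝ) < Real.exp (-1) := Real.exp_pos _
      have hc1 : 1 < c := by
        rw [hc, lt_div_iff₀ (by positivity)]
        linarith
      set ε' : ℝ := c * ε₀ with hε'
      have hε'pos : 0 < ε' := by positivity
      have hε₀ε' : ε₀ < ε' := by
        rw [hε']; nlinarith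
      have hεε' : ε ≤ ε' := le_trans hεε₀ hε₀ε'.le
      -- P' ≤ e^N
      have hP'le : (packingNumber T ε' : ℝ) ≤ Real.exp N := by
        by_contra h
        push_neg at h
        have : ε' ∈ B := ⟨hε'pos, h⟩
        have := le_csSup hBbdd this
        rw [← hε₀] at this
        linarith
      -- P' ≥ 1
      have hbP' : BddAbove (packSet T ε') := hbP.mono (packSet_mono T hεε')
      have hP'pos : 0 < packingNumber T ε' := by
        have hmem : 1 ∈ packSet T ε' := by
          refine ⟨{t₀}, by simpa using ht₀, by simp, Finset.card_singleton t₀⟩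
        have := le_csSup hbP' hmem
        rw [← packingNumber_def] at this
        omega
      have hlogP' : Real.log (packingNumber T ε') ≤ N :=
        (Real.log_le_iff_le_exp (by exact_mod_cast hP'pos)).2 hP'le
      -- volume comparison
      have hcomp := packing_compare hN hε hεε' hbP
      rw [← hP] at hcomp
      have hratio : ((2 * ε' + ε) / ε : ℝ) ≤ 3 * ε' / ε := by
        rw [div_le_div_iff₀ hε hε]
        nlinarith
      have hratio_pos : (0:ℝ) < (2 * ε' + ε) / ε := by positivity
      have hlogP : Real.log P ≤ N + N * Real.log (3 * ε' / ε) := by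
        have h1 : Real.log P ≤ Real.log ((packingNumber T ε' : ℝ) * ((2 * ε' + ε) / ε) ^ N) :=
          Real.log_le_log (by exact_mod_cast hPpos) hcomp
        rw [Real.log_mul (by exact_mod_cast hP'pos.ne') (by positivity),
          Real.log_pow] at h1
        have h2 : Real.log ((2 * ε' + ε) / ε) ≤ Real.log (3 * ε' / ε) :=
          Real.log_le_log hratio_pos hratio
        have h3 : (N:ℝ) * Real.log ((2 * ε' + ε) / ε) ≤ N * Real.log (3 * ε' / ε) := by
          apply mul_le_mul_of_nonneg_left h2 (by positivity)
        linarith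
      -- conclude
      have hstep : (ε : ℝ) * Real.log P / Real.sqrt N
          ≤ Real.sqrt N * (ε + ε * Real.log (3 * ε' / ε)) := by
        rw [div_le_iff₀ hsqN]
        have hNsq : Real.sqrt N * Real.sqrt N = (N:ℝ) :=
          Real.mul_self_sqrt (by positivity)
        have h4 : (ε:ℝ) * Real.log P ≤ ε * (N + N * Real.log (3 * ε' / ε)) :=
          mul_le_mul_of_nonneg_left hlogP hε.le
        calc (ε:ℝ) * Real.log P ≤ ε * (N + N * Real.log (3 * ε' / ε)) := h4
          _ = (Real.sqrt N * (ε + ε * Real.log (3 * ε' / ε))) * Real.sqrt N := by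
              rw [mul_comm (Real.sqrt N) _, mul_assoc, hNsq]; ring
      have hlog3 : ε * Real.log (3 * ε' / ε) ≤ 3 * ε' * Real.exp (-1) := by
        have h5 : Real.log (3 * ε' / ε) ≤ (3 * ε' / ε) * Real.exp (-1) :=
          log_le_div_e (by positivity)
        calc ε * Real.log (3 * ε' / ε) ≤ ε * ((3 * ε' / ε) * Real.exp (-1)) :=
              mul_le_mul_of_nonneg_left h5 hε.le
          _ = 3 * ε' * Real.exp (-1) := by field_simp
      have hfinal : (ε : ℝ) * Real.log P / Real.sqrt N
          ≤ (1 + 4 * Real.exp (-1)) * (Real.sqrt N * ε₀) := by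
        have h6 : ε + ε * Real.log (3 * ε' / ε) ≤ ε' + 3 * ε' * Real.exp (-1) := by
          have : ε ≤ ε' := hεε'
          linarith
        have h7 : Real.sqrt N * (ε + ε * Real.log (3 * ε' / ε))
            ≤ Real.sqrt N * (ε' * (1 + 3 * Real.exp (-1))) := by
          apply mul_le_mul_of_nonneg_left _ hsqN.le
          linarith
        have h8 : ε' * (1 + 3 * Real.exp (-1)) = (1 + 4 * Real.exp (-1)) * ε₀ := by
          rw [hε', hc]; field_simp
        calc (ε : ℝ) * Real.log P / Real.sqrt N
            ≤ Real.sqrt N * (ε + ε * Real.log (3 * ε' / ε)) := hstep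
          _ ≤ Real.sqrt N * (ε' * (1 + 3 * Real.exp (-1))) := h7
          _ = (1 + 4 * Real.exp (-1)) * (Real.sqrt N * ε₀) := by rw [h8]; ring
      calc (ε : ℝ) * Real.log P / Real.sqrt N
          ≤ (1 + 4 * Real.exp (-1)) * (Real.sqrt N * ε₀) := hfinal
        _ ≤ (1 + 4 * Real.exp (-1)) * w₁ := by
            apply mul_le_mul_of_nonneg_left hw₁bar (by positivity)
        _ ≤ (1 + 4 * Real.exp (-1)) * Real.sqrt (1 + Real.log 4) * w₁ := by
            nlinarith [mul_nonneg (mul_nonneg (le_trans zero_le_one hC0) hw₁nn)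
              (by linarith : (0:ℝ) ≤ Real.sqrt (1 + Real.log 4) - 1)]
  · -- F unbounded: both sups are 0
    have hbG : ¬BddAbove (Set.range G) := by
      intro ⟨M, hM⟩
      apply hbF
      have hM' : ∀ ε, G ε ≤ M := fun ε => hM (Set.mem_range_self ε)
      have hMnn : 0 ≤ M := le_trans (hGnn ⟨1, one_pos⟩) (hM' ⟨1, one_pos⟩)
      refine ⟨max (M * N / Real.log 2) M, fun y hy => ?_⟩
      obtain ⟨⟨ε, hε⟩, rfl⟩ := hy
      set P : ℕ := packingNumber T ε with hP
      have hlogPnn : 0 ≤ Real.log P := Real.log_natCast_nonneg P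
      by_cases hP1 : P ≤ 1
      · have : Real.log P = 0 := by
          interval_cases P <;> simp
        show (ε:ℝ) * Real.sqrt (Real.log P) ≤ _
        rw [this, Real.sqrt_zero, mul_zero]
        exact le_max_of_le_right hMnn
      · push_neg at hP1
        have hlog2 : Real.log 2 ≤ Real.log P := by
          apply Real.log_le_log (by norm_num)
          exact_mod_cast hP1
        have hlog2pos : (0:ℝ) < Real.log 2 := Real.log_pos (by norm_num)
        have hεle : (ε:ℝ) ≤ M * Real.sqrt N / Real.log 2 := by
          have hGε := hM' ⟨ε, hε⟩
          rw [hG] at hGε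
          simp only at hGε
          rw [div_le_iff₀ hsqN] at hGε
          have h9 : (ε:ℝ) * Real.log 2 ≤ (ε:ℝ) * Real.log P :=
            mul_le_mul_of_nonneg_left hlog2 hε.le
          rw [le_div_iff₀ hlog2pos]
          linarith
        by_cases hPN : Real.log P ≤ N
        · have h1 : Real.sqrt (Real.log P) ≤ Real.sqrt N := Real.sqrt_le_sqrt hPN
          have h2 : (ε:ℝ) * Real.sqrt (Real.log P) ≤ (ε:ℝ) * Real.sqrt N :=
            mul_le_mul_of_nonneg_left h1 hε.le
          have h3 : (ε:ℝ) * Real.sqrt N ≤ (M * Real.sqrt N / Real.log 2) * Real.sqrt N :=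
            mul_le_mul_of_nonneg_right hεle hsqN.le
          have hNsq : Real.sqrt N * Real.sqrt N = (N:ℝ) :=
            Real.mul_self_sqrt (by positivity)
          refine le_max_of_le_left ?_
          calc (ε:ℝ) * Real.sqrt (Real.log P) ≤ (M * Real.sqrt N / Real.log 2) * Real.sqrt N :=
                le_trans h2 h3
            _ = M * N / Real.log 2 := by
                rw [div_mul_eq_mul_div, mul_assoc, hNsq]
        · push_neg at hPN
          have h1 : Real.sqrt (Real.log P) ≤ Real.log P / Real.sqrt N := by
            rw [le_div_iff₀ hsqN]
            calc Real.sqrt (Real.log P) * Real.sqrt N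
                ≤ Real.sqrt (Real.log P) * Real.sqrt (Real.log P) := by
                  apply mul_le_mul_of_nonneg_left _ (Real.sqrt_nonneg _)
                  exact Real.sqrt_le_sqrt hPN.le
              _ = Real.log P := Real.mul_self_sqrt hlogPnn
          have h2 : (ε:ℝ) * Real.sqrt (Real.log P) ≤ (ε:ℝ) * (Real.log P / Real.sqrt N) :=
            mul_le_mul_of_nonneg_left h1 hε.le
          have h3 := hM' ⟨ε, hε⟩
          rw [hG] at h3
          simp only at h3
          refine le_max_of_le_right ?_
          calc (ε:ℝ) * Real.sqrt (Real.log P) ≤ (ε:ℝ) * Real.log P / Real.sqrt N := by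
                rw [mul_div_assoc]; exact h2
            _ ≤ M := h3
    have hw₁0 : w₁ = 0 := by rw [hw₁]; exact Real.iSup_of_not_bddAbove hbF
    have hw₂0 : w₂ = 0 := by rw [hw₂]; exact Real.iSup_of_not_bddAbove hbG
    rw [hw₁0, hw₂0, mul_zero]
end

section
/- Let A ⊆ ℝ^N be compact, ε > 0, and let r(A) := E[sup_{t∈A} |Σ_{i=1}^N ε_i t_i|] be the Rademacher complexity (ε_i i.i.d. uniform on {−1,1}). Then r(A) ≥ (ε/2)(N(A, ε B₁)^{1/N} − 1) ≥ (ε/(2N)) log N(A, ε B₁), where N(A, ε B₁) is the covering number of A by translates of the ε-dilated ℓ₁ unit ball. -/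
open Pointwise MeasureTheory ENNReal

/-- The covering number `N(A, B)`: the minimum number of translates of `B` whose union
contains `A`. -/
noncomputable def coveringNumber {E : Type*} [AddCommGroup E]
    (A B : Set E) : ℕ :=
  sInf {n : ℕ | ∃ S : Finset E, S.card = n ∧ A ⊆ ↑S + B}

/-- The Rademacher complexity `r(A) = E[sup_{t∈A} |Σᵢ εᵢ tᵢ|]` with `εᵢ` i.i.d.
uniform on `{-1, 1}`. -/
noncomputable def rademacherComplexity (N : ℕ) (A : Set (Fin N → ℝ)) : ℝ :=
  (∑ σ : Fin N → Bool,
    sSup ((fun t => |∑ i, (if σ i then (1 : ℝ) else -1) * t i|) '' A)) / 2 ^ N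



namespace RadMin

def dotB {n : ℕ} (σ : Fin n → Bool) (x : Fin n → ℝ) : ℝ :=
  ∑ i, (if σ i then (1 : ℝ) else -1) * x i

def KSet (n : ℕ) (c : (Fin n → Bool) → ℝ) : Set (Fin n → ℝ) :=
  {x | ∀ σ, dotB σ x ≤ c σ}

lemma continuous_dotB {n : ℕ} (σ : Fin n → Bool) : Continuous (dotB σ) := by
  unfold dotB
  exact continuous_finset_sum _ fun i _ => (continuous_const.mul (continuous_apply i))

lemma isClosed_KSet (n : ℕ) (c : (Fin n → Bool) → ℝ) : IsClosed (KSet n c) := by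
  have : KSet n c = ⋂ σ, {x | dotB σ x ≤ c σ} := by
    ext x; simp [KSet, Set.mem_iInter]
  rw [this]
  exact isClosed_iInter fun σ => isClosed_le (continuous_dotB σ) continuous_const

lemma dotB_cons {n : ℕ} (b : Bool) (σ' : Fin n → Bool) (t : ℝ) (y : Fin n → ℝ) :
    dotB (Fin.cons b σ') (Fin.cons t y) = (if b then t else -t) + dotB σ' y := by
  unfold dotB
  rw [Fin.sum_univ_succ]
  simp only [Fin.cons_zero, Fin.cons_succ]
  by_cases h : b <;> simp [h]

lemma slice_KSet {n : ℕ} (c : (Fin (n+1) → Bool) → ℝ) (t : ℝ) :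
    {y : Fin n → ℝ | Fin.cons t y ∈ KSet (n+1) c} =
      KSet n (fun σ' => min (c (Fin.cons true σ') - t) (c (Fin.cons false σ') + t)) := by
  ext y
  constructor
  · intro h σ'
    have h1 := h (Fin.cons true σ')
    have h2 := h (Fin.cons false σ')
    rw [dotB_cons] at h1 h2
    simp only [if_true, Bool.false_eq_true, if_false] at h1 h2
    refine le_min (by linarith) (by linarith)
  · intro h σ
    have hσ : σ = Fin.cons (σ 0) (Fin.tail σ) := (Fin.cons_self_tail σ).symm
    have h' := h (Fin.tail σ)
    have h1 := (le_min_iff.mp h').1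
    have h2 := (le_min_iff.mp h').2
    rw [hσ, dotB_cons]
    cases h0 : σ 0
    · rw [h0] at hσ
      simp only [Bool.false_eq_true, if_false]
      linarith [hσ ▸ h2]
    · rw [h0] at hσ
      simp only [if_true]
      linarith [hσ ▸ h1]

end RadMin

namespace RadMin

lemma sum_cons_split {n : ℕ} (c : (Fin (n+1) → Bool) → ℝ) :
    ∑ σ, c σ = (∑ σ' : Fin n → Bool, c (Fin.cons true σ')) +
      ∑ σ' : Fin n → Bool, c (Fin.cons false σ') := by
  rw [← Equiv.sum_comp (Fin.consEquiv (fun _ => Bool)) c, Fintype.sum_prod_type,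
    Fintype.sum_bool]
  rfl

lemma volume_eq_lintegral_slice {n : ℕ} (S : Set (Fin (n+1) → ℝ)) (hS : MeasurableSet S) :
    volume S = ∫⁻ t : ℝ, volume {y : Fin n → ℝ | Fin.cons t y ∈ S} := by
  have h := measurePreserving_piFinSuccAbove (fun _ : Fin (n+1) => (volume : Measure ℝ)) 0
  set e := MeasurableEquiv.piFinSuccAbove (fun _ : Fin (n+1) => ℝ) 0 with he
  have hT : MeasurableSet (e.symm ⁻¹' S) := e.symm.measurable hS
  have hpre : e ⁻¹' (e.symm ⁻¹' S) = S := by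
    ext x; simp
  have h1 : volume S = ((volume : Measure ℝ).prod
      (Measure.pi fun _ : Fin n => (volume : Measure ℝ))) (e.symm ⁻¹' S) := by
    rw [← h.measure_preimage hT.nullMeasurableSet, hpre]
    rfl
  rw [h1, Measure.prod_apply hT]
  congr 1
  funext t
  have : (Prod.mk t ⁻¹' (e.symm ⁻¹' S)) = {y : Fin n → ℝ | Fin.cons t y ∈ S} := by
    ext y
    simp only [Set.mem_preimage, Set.mem_setOf_eq]
    have : e.symm (t, y) = Fin.cons t y := by
      show (Fin.insertNthEquiv (fun _ => ℝ) 0) (t, y) = Fin.cons t y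
      rw [Fin.insertNthEquiv_zero]
      rfl
    rw [this]
  rw [this]
  rfl

end RadMin

namespace RadMin

lemma tentF_integral (n : ℕ) (hn : 1 ≤ n) (a : ℝ) (ha : 0 ≤ a) :
    ∫ t : ℝ, (2 * max (a - |t|) 0) ^ n / (n.factorial : ℝ) =
      (2 * a) ^ (n+1) / ((n+1).factorial : ℝ) := by
  have key : ∫ t : ℝ, (2 * max (a - |t|) 0) ^ n / (n.factorial : ℝ)
      = 2 * ∫ t in Set.Ioi (0:ℝ), (2 * max (a - t) 0) ^ n / (n.factorial : ℝ) :=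
    integral_comp_abs (f := fun s => (2 * max (a - s) 0) ^ n / (n.factorial : ℝ))
  rw [key]
  have hcont : Continuous (fun s : ℝ => (2 * max (a - s) 0) ^ n / (n.factorial : ℝ)) := by
    exact ((continuous_const.mul (((continuous_const.sub continuous_id').max
      continuous_const))).pow n).div_const _
  have hsupp : ∀ s : ℝ, a < s → (2 * max (a - s) 0) ^ n / (n.factorial : ℝ) = 0 := by
    intro s hs
    rw [max_eq_right (by linarith), mul_zero, zero_pow (by omega), zero_div]
  have hsplit : Set.Ioi (0:ℝ) = Set.Ioc 0 a ∪ Set.Ioi a := (Set.Ioc_union_Ioi_eq_Ioi ha).symm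
  have hIoiZero : ∫ t in Set.Ioi a, (2 * max (a - t) 0) ^ n / (n.factorial : ℝ) = 0 := by
    apply MeasureTheory.setIntegral_eq_zero_of_forall_eq_zero
    intro x hx
    exact hsupp x hx
  have hint : IntegrableOn (fun s : ℝ => (2 * max (a - s) 0) ^ n / (n.factorial : ℝ))
      (Set.Ioc 0 a) := by
    exact (hcont.integrableOn_Ioc)
  have : ∫ t in Set.Ioi (0:ℝ), (2 * max (a - t) 0) ^ n / (n.factorial : ℝ)
      = ∫ t in Set.Ioc 0 a, (2 * max (a - t) 0) ^ n / (n.factorial : ℝ) := by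
    rw [hsplit, MeasureTheory.setIntegral_union (Set.Ioc_disjoint_Ioi le_rfl) measurableSet_Ioi
      hint (by
        apply MeasureTheory.integrableOn_zero.congr_fun ?_ measurableSet_Ioi
        intro x hx
        exact (hsupp x hx).symm), hIoiZero, add_zero]
  rw [this, ← intervalIntegral.integral_of_le ha]
  have hcongr : ∀ t ∈ Set.uIcc (0:ℝ) a,
      (2 * max (a - t) 0) ^ n / (n.factorial : ℝ) = (2:ℝ)^n * (a - t) ^ n / (n.factorial : ℝ) := by
    intro t ht
    rw [Set.uIcc_of_le ha] at ht
    rw [max_eq_left (by linarith [ht.2]), mul_pow]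
  rw [intervalIntegral.integral_congr hcongr]
  have : ∫ t in (0:ℝ)..a, (2:ℝ)^n * (a - t) ^ n / (n.factorial : ℝ)
      = ((2:ℝ)^n / (n.factorial : ℝ)) * ∫ t in (0:ℝ)..a, (a - t) ^ n := by
    rw [← intervalIntegral.integral_const_mul]
    congr 1
    funext t
    ring
  rw [this]
  have hsub : ∫ t in (0:ℝ)..a, (a - t) ^ n = ∫ t in (0:ℝ)..a, t ^ n := by
    have := intervalIntegral.integral_comp_sub_left (a := (0:ℝ)) (b := a)
      (fun u : ℝ => u ^ n) a
    simpa using this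
  rw [hsub, integral_pow]
  have hfact : ((n+1).factorial : ℝ) = (n+1) * (n.factorial : ℝ) := by
    rw [Nat.factorial_succ]; push_cast; ring
  rw [hfact]
  have h1 : ((n:ℝ)+1) ≠ 0 := by positivity
  have h2 : (n.factorial : ℝ) ≠ 0 := by positivity
  field_simp
  ring

end RadMin

namespace RadMin

lemma lintegral_tent (n : ℕ) (hn : 1 ≤ n) (a : ℝ) (ha : 0 ≤ a) (m : ℝ) :
    ∫⁻ t : ℝ, ENNReal.ofReal ((2 * max (a - |t - m|) 0) ^ n / (n.factorial : ℝ)) =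
      ENNReal.ofReal ((2 * a) ^ (n+1) / ((n+1).factorial : ℝ)) := by
  have hshift : ∫⁻ t : ℝ, ENNReal.ofReal ((2 * max (a - |t - m|) 0) ^ n / (n.factorial : ℝ))
      = ∫⁻ t : ℝ, ENNReal.ofReal ((2 * max (a - |t|) 0) ^ n / (n.factorial : ℝ)) := by
    have := lintegral_add_right_eq_self (μ := (volume : Measure ℝ))
      (fun t : ℝ => ENNReal.ofReal ((2 * max (a - |t|) 0) ^ n / (n.factorial : ℝ))) (-m)
    simp only [← sub_eq_add_neg] at this
    exact this
  rw [hshift]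
  have hcont : Continuous (fun t : ℝ => (2 * max (a - |t|) 0) ^ n / (n.factorial : ℝ)) := by
    exact ((continuous_const.mul (((continuous_const.sub continuous_abs).max
      continuous_const))).pow n).div_const _
  have hsupp : HasCompactSupport
      (fun t : ℝ => (2 * max (a - |t|) 0) ^ n / (n.factorial : ℝ)) := by
    apply HasCompactSupport.intro (isCompact_Icc (a := -a) (b := a))
    intro t ht
    have : a < |t| := by
      rcases abs_cases t with ⟨h1, _⟩ | ⟨h1, _⟩ <;>
        [skip; skip] <;> simp only [Set.mem_Icc, not_and_or, not_le] at ht <;> rcases ht with h | h <;> linarith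
    rw [max_eq_right (by linarith), mul_zero, zero_pow (by omega), zero_div]
  have hint : Integrable (fun t : ℝ => (2 * max (a - |t|) 0) ^ n / (n.factorial : ℝ)) :=
    hcont.integrable_of_hasCompactSupport hsupp
  have hnn : 0 ≤ᵐ[volume] fun t : ℝ => (2 * max (a - |t|) 0) ^ n / (n.factorial : ℝ) := by
    refine Filter.Eventually.of_forall fun t => ?_
    positivity
  rw [← MeasureTheory.ofReal_integral_eq_lintegral_ofReal hint hnn,
    tentF_integral n hn a ha]

end RadMin

namespace RadMin

lemma sum_fin_one_bool (c : (Fin 1 → Bool) → ℝ) :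
    ∑ σ, c σ = c (fun _ => true) + c (fun _ => false) := by
  rw [← Equiv.sum_comp (Equiv.funUnique (Fin 1) Bool).symm c, Fintype.sum_bool]
  rfl

lemma fin_one_sigma (σ : Fin 1 → Bool) : σ = fun _ => σ 0 := by
  funext i
  rw [Subsingleton.elim i 0]

lemma KSet_one (c : (Fin 1 → Bool) → ℝ) :
    KSet 1 c = (MeasurableEquiv.funUnique (Fin 1) ℝ) ⁻¹'
      (Set.Icc (-(c (fun _ => false))) (c (fun _ => true))) := by
  ext x
  have hdot : ∀ σ : Fin 1 → Bool, dotB σ x = (if σ 0 then (1:ℝ) else -1) * x 0 := by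
    intro σ; unfold dotB; rw [Fin.sum_univ_one]
  constructor
  · intro h
    have h1 := h (fun _ => true)
    have h2 := h (fun _ => false)
    rw [hdot] at h1 h2
    simp only [if_true, Bool.false_eq_true, if_false, one_mul, neg_one_mul] at h1 h2
    have hx : (MeasurableEquiv.funUnique (Fin 1) ℝ) x = x 0 := rfl
    simp only [Set.mem_preimage, Set.mem_Icc, hx]
    exact ⟨by linarith, by linarith⟩
  · intro hmem σ
    have hx : (MeasurableEquiv.funUnique (Fin 1) ℝ) x = x 0 := rfl
    simp only [Set.mem_preimage, Set.mem_Icc, hx] at hmem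
    obtain ⟨h1, h2⟩ := hmem
    rw [hdot, fin_one_sigma σ]
    cases h0 : σ 0
    · simp only [Bool.false_eq_true, if_false, neg_one_mul]
      linarith
    · simp only [if_true, one_mul]
      exact h2
  
lemma volume_KSet_one_le (c : (Fin 1 → Bool) → ℝ) :
    volume (KSet 1 c) ≤ ENNReal.ofReal (c (fun _ => true) + c (fun _ => false)) := by
  erw [KSet_one c, (volume_preserving_funUnique (Fin 1) ℝ).measure_preimage
    measurableSet_Icc.nullMeasurableSet, Real.volume_Icc]
  apply ENNReal.ofReal_le_ofReal
  ring_nf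
  exact le_refl _

end RadMin

namespace RadMin

lemma volume_KSet_le : ∀ (n : ℕ) (c : (Fin (n+1) → Bool) → ℝ),
    volume (KSet (n+1) c) ≤
      ENNReal.ofReal ((2 * max ((∑ σ, c σ) / 2 ^ (n+1)) 0) ^ (n+1) / ((n+1).factorial : ℝ)) := by
  intro n
  induction n with
  | zero =>
    intro c
    refine (volume_KSet_one_le c).trans (ENNReal.ofReal_le_ofReal ?_)
    rw [sum_fin_one_bool]
    have hmax := le_max_left ((c (fun _ => true) + c (fun _ => false)) / 2 ^ (0+1)) 0
    simp only [pow_one, Nat.factorial_one, Nat.cast_one, div_one, zero_add] at *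
    linarith
  | succ n IH =>
    intro c
    have hcard : (Finset.univ : Finset ((Fin (n+1)) → Bool)).card = 2 ^ (n+1) := by
      simp [Finset.card_univ]
    set aT := (∑ σ' : Fin (n+1) → Bool, c (Fin.cons true σ')) / 2 ^ (n+1) with haT
    set aF := (∑ σ' : Fin (n+1) → Bool, c (Fin.cons false σ')) / 2 ^ (n+1) with haF
    set E := (aT + aF) / 2 with hE
    set m := (aT - aF) / 2 with hm
    have h2pow : (0:ℝ) < 2 ^ (n+1) := by positivity
    have hmeas : MeasurableSet (KSet (n+1+1) c) := (isClosed_KSet _ _).measurableSet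
    rw [volume_eq_lintegral_slice _ hmeas]
    have hEeq : E = (∑ σ, c σ) / 2 ^ (n+1+1) := by
      rw [hE, haT, haF, sum_cons_split (n := n+1) c, ← add_div, div_div,
        ← pow_succ]
    have hslice : ∀ t : ℝ, volume {y : Fin (n+1) → ℝ | Fin.cons t y ∈ KSet (n+1+1) c}
        ≤ ENNReal.ofReal
          ((2 * max (max E 0 - |t - m|) 0) ^ (n+1) / ((n+1).factorial : ℝ)) := by
      intro t
      rw [slice_KSet]
      refine (IH _).trans (ENNReal.ofReal_le_ofReal ?_)
      set Et := (∑ σ' : Fin (n+1) → Bool,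
        min (c (Fin.cons true σ') - t) (c (Fin.cons false σ') + t)) / 2 ^ (n+1) with hEt
      have hsumT : ∑ σ' : Fin (n+1) → Bool,
          min (c (Fin.cons true σ') - t) (c (Fin.cons false σ') + t)
          ≤ (∑ σ' : Fin (n+1) → Bool, c (Fin.cons true σ')) - 2 ^ (n+1) * t := by
        have := Finset.sum_le_sum (f := fun σ' : Fin (n+1) → Bool =>
          min (c (Fin.cons true σ') - t) (c (Fin.cons false σ') + t))
          (g := fun σ' => c (Fin.cons true σ') - t)
          (s := Finset.univ) (fun i _ => min_le_left _ _)
        rw [Finset.sum_sub_distrib, Finset.sum_const, hcard] at this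
        calc _ ≤ _ := this
        _ = _ := by push_cast [nsmul_eq_mul]; ring
      have hsumF : ∑ σ' : Fin (n+1) → Bool,
          min (c (Fin.cons true σ') - t) (c (Fin.cons false σ') + t)
          ≤ (∑ σ' : Fin (n+1) → Bool, c (Fin.cons false σ')) + 2 ^ (n+1) * t := by
        have := Finset.sum_le_sum (f := fun σ' : Fin (n+1) → Bool =>
          min (c (Fin.cons true σ') - t) (c (Fin.cons false σ') + t))
          (g := fun σ' => c (Fin.cons false σ') + t)
          (s := Finset.univ) (fun i _ => min_le_right _ _)
        rw [Finset.sum_add_distrib, Finset.sum_const, hcard] at this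
        calc _ ≤ _ := this
        _ = _ := by push_cast [nsmul_eq_mul]; ring
      have h1 : Et ≤ aT - t := by
        rw [hEt, haT]
        rw [div_le_iff₀ h2pow, sub_mul, div_mul_cancel₀ _ (ne_of_gt h2pow)]
        linarith
      have h2 : Et ≤ aF + t := by
        rw [hEt, haF]
        rw [div_le_iff₀ h2pow, add_mul, div_mul_cancel₀ _ (ne_of_gt h2pow)]
        linarith
      have h3 : Et ≤ max E 0 - |t - m| := by
        have hEmax := le_max_left E (0:ℝ)
        rcases abs_cases (t - m) with ⟨heq, _⟩ | ⟨heq, _⟩ <;> rw [heq] <;>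
          [linarith [h1]; linarith [h2]]
      have h4 : max Et 0 ≤ max (max E 0 - |t - m|) 0 := max_le_max h3 le_rfl
      gcongr <;> first | positivity | linarith
    calc ∫⁻ t : ℝ, volume {y : Fin (n+1) → ℝ | Fin.cons t y ∈ KSet (n+1+1) c}
        ≤ ∫⁻ t : ℝ, ENNReal.ofReal
          ((2 * max (max E 0 - |t - m|) 0) ^ (n+1) / ((n+1).factorial : ℝ)) :=
          lintegral_mono hslice
      _ = ENNReal.ofReal ((2 * max E 0) ^ (n+1+1) / ((n+1+1).factorial : ℝ)) :=
          lintegral_tent (n+1) (by omega) (max E 0) (le_max_right _ _) m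
      _ = ENNReal.ofReal
          ((2 * max ((∑ σ, c σ) / 2 ^ (n+1+1)) 0) ^ (n+1+1) / ((n+1+1).factorial : ℝ)) := by
          rw [← hEeq]

end RadMin

namespace RadMin

lemma le_volume_KSet_const : ∀ (n : ℕ) (a : ℝ), 0 ≤ a →
    ENNReal.ofReal ((2 * a) ^ (n+1) / ((n+1).factorial : ℝ)) ≤
      volume (KSet (n+1) (fun _ => a)) := by
  intro n
  induction n with
  | zero =>
    intro a ha
    erw [KSet_one, (volume_preserving_funUnique (Fin 1) ℝ).measure_preimage
      measurableSet_Icc.nullMeasurableSet, Real.volume_Icc]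
    apply ENNReal.ofReal_le_ofReal
    norm_num
    linarith
  | succ n IH =>
    intro a ha
    have hmeas : MeasurableSet (KSet (n+1+1) (fun _ => a)) :=
      (isClosed_KSet _ _).measurableSet
    rw [volume_eq_lintegral_slice _ hmeas]
    have hslice : ∀ t : ℝ,
        ENNReal.ofReal ((2 * max (a - |t - 0|) 0) ^ (n+1) / ((n+1).factorial : ℝ)) ≤
          volume {y : Fin (n+1) → ℝ | Fin.cons t y ∈ KSet (n+1+1) (fun _ => a)} := by
      intro t
      rw [slice_KSet]
      have hc' : (fun σ' : Fin (n+1) → Bool =>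
          min ((fun _ : Fin (n+1+1) → Bool => a) (Fin.cons true σ') - t)
            ((fun _ : Fin (n+1+1) → Bool => a) (Fin.cons false σ') + t))
          = fun _ : Fin (n+1) → Bool => a - |t| := by
        funext σ'
        rcases abs_cases t with ⟨h, _⟩ | ⟨h, _⟩
        · rw [h]; exact min_eq_left (by linarith)
        · rw [h, min_eq_right (by linarith : a + t ≤ a - t)]; ring
      rw [hc']
      by_cases hta : |t| ≤ a
      · refine le_trans (ENNReal.ofReal_le_ofReal ?_) (IH (a - |t|) (by linarith))
        rw [sub_zero, max_eq_left (by linarith)]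
      · rw [sub_zero, max_eq_right (by push_neg at hta; linarith), mul_zero,
          zero_pow (by omega), zero_div, ENNReal.ofReal_zero]
        exact zero_le
    calc ENNReal.ofReal ((2 * a) ^ (n+1+1) / ((n+1+1).factorial : ℝ))
        = ∫⁻ t : ℝ, ENNReal.ofReal
          ((2 * max (a - |t - 0|) 0) ^ (n+1) / ((n+1).factorial : ℝ)) :=
          (lintegral_tent (n+1) (by omega) a ha 0).symm
      _ ≤ _ := lintegral_mono hslice

end RadMin

namespace RadMin

lemma dotB_le_abs_sum {n : ℕ} (σ : Fin n → Bool) (u : Fin n → ℝ) :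
    dotB σ u ≤ ∑ i, |u i| := by
  unfold dotB
  refine Finset.sum_le_sum fun i _ => ?_
  cases h : σ i
  · simp only [Bool.false_eq_true, if_false, neg_one_mul]
    exact neg_le_abs _
  · simp only [if_true, one_mul]
    exact le_abs_self _

lemma abs_sum_eq_KSet {n : ℕ} (a : ℝ) :
    {x : Fin n → ℝ | ∑ i, |x i| ≤ a} = KSet n (fun _ => a) := by
  ext x
  constructor
  · intro h σ
    exact (dotB_le_abs_sum σ x).trans h
  · intro h
    have h' := h (fun i => decide (0 ≤ x i))
    unfold dotB at h'
    calc ∑ i, |x i| = ∑ i, (if decide (0 ≤ x i) = true then (1:ℝ) else -1) * x i := by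
          refine Finset.sum_congr rfl fun i _ => ?_
          by_cases hx : 0 ≤ x i
          · simp [hx, abs_of_nonneg hx]
          · push_neg at hx
            simp [not_le.mpr hx, abs_of_neg hx]
      _ ≤ a := h'

lemma dotB_sub {n : ℕ} (σ : Fin n → Bool) (x s : Fin n → ℝ) :
    dotB σ (fun i => x i - s i) = dotB σ x - dotB σ s := by
  unfold dotB
  rw [← Finset.sum_sub_distrib]
  exact Finset.sum_congr rfl fun i _ => by ring

lemma packing_bound (n : ℕ) (A : Set (Fin (n+1) → ℝ)) (hA : IsCompact A)
    (hAne : A.Nonempty) (ε : ℝ) (hε : 0 < ε) (S : Finset (Fin (n+1) → ℝ))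
    (hS : ↑S ⊆ A)
    (hsep : ∀ x ∈ S, ∀ y ∈ S, x ≠ y → ε < ∑ i, |x i - y i|) :
    (S.card : ℝ) ≤ ((2 * rademacherComplexity (n+1) A + ε) / ε) ^ (n+1) := by
  obtain ⟨t₀, ht₀⟩ := hAne
  set R := rademacherComplexity (n+1) A with hR
  set s : ((Fin (n+1) → Bool)) → ℝ := fun σ => sSup ((fun t => dotB σ t) '' A) with hs
  set sa : ((Fin (n+1) → Bool)) → ℝ := fun σ => sSup ((fun t => |dotB σ t|) '' A) with hsa
  have hbdd : ∀ σ, BddAbove ((fun t => dotB σ t) '' A) :=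
    fun σ => (hA.image (continuous_dotB σ)).bddAbove
  have hbdda : ∀ σ, BddAbove ((fun t => |dotB σ t|) '' A) :=
    fun σ => (hA.image (continuous_abs.comp (continuous_dotB σ))).bddAbove
  have hs_le : ∀ σ, ∀ t ∈ A, dotB σ t ≤ s σ :=
    fun σ t ht => le_csSup (hbdd σ) ⟨t, ht, rfl⟩
  have hssa : ∀ σ, s σ ≤ sa σ := by
    intro σ
    apply csSup_le (Set.Nonempty.image _ ⟨t₀, ht₀⟩)
    rintro y ⟨t, ht, rfl⟩
    exact (le_abs_self _).trans (le_csSup (hbdda σ) ⟨t, ht, rfl⟩)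
  have hsa0 : ∀ σ, 0 ≤ sa σ :=
    fun σ => (abs_nonneg _).trans (le_csSup (hbdda σ) ⟨t₀, ht₀, rfl⟩)
  have hRdef : R = (∑ σ : Fin (n+1) → Bool, sa σ) / 2 ^ (n+1) := rfl
  have hR0 : 0 ≤ R := by
    rw [hRdef]
    have : 0 ≤ ∑ σ : Fin (n+1) → Bool, sa σ := Finset.sum_nonneg fun σ _ => hsa0 σ
    positivity
  have hcard2 : (Finset.univ : Finset ((Fin (n+1)) → Bool)).card = 2 ^ (n+1) := by
    simp [Finset.card_univ]
  set B : (Fin (n+1) → ℝ) → Set (Fin (n+1) → ℝ) :=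
    fun s₀ => {x | ∑ i, |x i - s₀ i| ≤ ε / 2} with hB
  have hBclosed : ∀ s₀, IsClosed (B s₀) :=
    fun s₀ => isClosed_le (continuous_finset_sum _ fun i _ =>
      ((continuous_apply i).sub continuous_const).abs) continuous_const
  have hBvol : ∀ s₀, ENNReal.ofReal (ε ^ (n+1) / ((n+1).factorial : ℝ)) ≤ volume (B s₀) := by
    intro s₀
    have htrans : B s₀ = (fun x => x + (-s₀)) ⁻¹' {u : Fin (n+1) → ℝ | ∑ i, |u i| ≤ ε / 2} := by
      ext x
      simp only [hB, Set.mem_setOf_eq, Set.mem_preimage, Pi.add_apply, Pi.neg_apply,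
        Pi.sub_apply, ← sub_eq_add_neg]
    rw [htrans, abs_sum_eq_KSet, measure_preimage_add_right volume (-s₀) _]
    have hvol := le_volume_KSet_const n (ε/2) (by linarith)
    rw [show 2 * (ε/2) = ε by ring] at hvol
    exact hvol
  have hsubset : ∀ s₀ ∈ S, B s₀ ⊆ KSet (n+1) (fun σ => s σ + ε/2) := by
    intro s₀ hs₀ x hx σ
    have h1 : dotB σ x - dotB σ s₀ ≤ ε/2 :=
      (dotB_sub σ x s₀ ▸ dotB_le_abs_sum σ (fun i => x i - s₀ i)).trans hx
    have h2 : dotB σ s₀ ≤ s σ := hs_le σ s₀ (hS hs₀)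
    linarith
  have hdisj : (↑S : Set (Fin (n+1) → ℝ)).PairwiseDisjoint B := by
    intro x hx y hy hxy
    refine Set.disjoint_left.mpr fun {z} hzx hzy => ?_
    have hgt := hsep x hx y hy hxy
    have hle : ∑ i, |x i - y i| ≤ ε := by
      have tri : ∀ i : Fin (n+1), |x i - y i| ≤ |z i - x i| + |z i - y i| := by
        intro i
        have h1 := abs_sub_le (x i) (z i) (y i)
        rw [abs_sub_comm (x i) (z i)] at h1
        exact h1
      calc ∑ i, |x i - y i| ≤ ∑ i, (|z i - x i| + |z i - y i|) :=
            Finset.sum_le_sum fun i _ => tri i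
        _ = (∑ i, |z i - x i|) + ∑ i, |z i - y i| := Finset.sum_add_distrib
        _ ≤ ε/2 + ε/2 := add_le_add hzx hzy
        _ = ε := by ring
    linarith
  have hsum : ∑ s₀ ∈ S, volume (B s₀) = volume (⋃ s₀ ∈ S, B s₀) :=
    (measure_biUnion_finset hdisj (fun s₀ _ => (hBclosed s₀).measurableSet)).symm
  have hupper : volume (KSet (n+1) (fun σ => s σ + ε/2)) ≤
      ENNReal.ofReal ((2 * R + ε) ^ (n+1) / ((n+1).factorial : ℝ)) := by
    refine (volume_KSet_le n _).trans (ENNReal.ofReal_le_ofReal ?_)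
    have hEc : (∑ σ : Fin (n+1) → Bool, (s σ + ε/2)) / 2 ^ (n+1) ≤ R + ε/2 := by
      rw [Finset.sum_add_distrib, Finset.sum_const, hcard2, hRdef]
      have hle : ∑ σ : Fin (n+1) → Bool, s σ ≤ ∑ σ : Fin (n+1) → Bool, sa σ :=
        Finset.sum_le_sum fun σ _ => hssa σ
      have h2pow : (0:ℝ) < 2^(n+1) := by positivity
      rw [div_le_iff₀ h2pow, add_mul, div_mul_cancel₀ _ (ne_of_gt h2pow)]
      push_cast [nsmul_eq_mul]
      nlinarith [hle]
    have hmax : max ((∑ σ : Fin (n+1) → Bool, (s σ + ε/2)) / 2 ^ (n+1)) 0 ≤ R + ε/2 :=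
      max_le hEc (by linarith)
    gcongr
    all_goals first | positivity | linarith
  have hchain : (S.card : ℝ≥0∞) * ENNReal.ofReal (ε ^ (n+1) / ((n+1).factorial : ℝ)) ≤
      ENNReal.ofReal ((2 * R + ε) ^ (n+1) / ((n+1).factorial : ℝ)) := by
    calc (S.card : ℝ≥0∞) * ENNReal.ofReal (ε ^ (n+1) / ((n+1).factorial : ℝ))
        = ∑ _s₀ ∈ S, ENNReal.ofReal (ε ^ (n+1) / ((n+1).factorial : ℝ)) := by
          rw [Finset.sum_const, nsmul_eq_mul]
      _ ≤ ∑ s₀ ∈ S, volume (B s₀) := Finset.sum_le_sum fun s₀ _ => hBvol s₀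
      _ = volume (⋃ s₀ ∈ S, B s₀) := hsum
      _ ≤ volume (KSet (n+1) (fun σ => s σ + ε/2)) :=
          measure_mono (Set.iUnion₂_subset hsubset)
      _ ≤ _ := hupper
  have hreal : (S.card : ℝ) * (ε ^ (n+1) / ((n+1).factorial : ℝ)) ≤
      (2 * R + ε) ^ (n+1) / ((n+1).factorial : ℝ) := by
    rw [← ENNReal.ofReal_natCast, ← ENNReal.ofReal_mul (by positivity)] at hchain
    exact (ENNReal.ofReal_le_ofReal_iff (by positivity)).mp hchain
  have hf : (0:ℝ) < ((n+1).factorial : ℝ) := by positivity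
  have h1 : (S.card : ℝ) * ε^(n+1) ≤ (2 * R + ε)^(n+1) := by
    have h2 := mul_le_mul_of_nonneg_right hreal hf.le
    calc (S.card : ℝ) * ε^(n+1)
        = (S.card : ℝ) * (ε^(n+1) / ((n+1).factorial : ℝ)) * ((n+1).factorial : ℝ) := by
          field_simp
      _ ≤ ((2 * R + ε)^(n+1) / ((n+1).factorial : ℝ)) * ((n+1).factorial : ℝ) := h2
      _ = (2 * R + ε)^(n+1) := by field_simp
  rw [div_pow, le_div_iff₀ (pow_pos hε _)]
  exact h1

end RadMin

namespace RadMin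

lemma rademacher_nonneg (N : ℕ) (A : Set (Fin N → ℝ)) (hA : IsCompact A)
    (hAne : A.Nonempty) : 0 ≤ rademacherComplexity N A := by
  obtain ⟨t₀, ht₀⟩ := hAne
  have h : ∀ σ : Fin N → Bool,
      0 ≤ sSup ((fun t => |∑ i, (if σ i then (1 : ℝ) else -1) * t i|) '' A) := by
    intro σ
    have hbdda : BddAbove ((fun t => |dotB σ t|) '' A) :=
      (hA.image (continuous_abs.comp (continuous_dotB σ))).bddAbove
    exact (abs_nonneg _).trans (le_csSup hbdda ⟨t₀, ht₀, rfl⟩)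
  unfold rademacherComplexity
  have hsum : 0 ≤ ∑ σ : Fin N → Bool,
      sSup ((fun t => |∑ i, (if σ i then (1 : ℝ) else -1) * t i|) '' A) :=
    Finset.sum_nonneg fun σ _ => h σ
  positivity

lemma exists_good_cover (n : ℕ) (A : Set (Fin (n+1) → ℝ)) (hA : IsCompact A)
    (hAne : A.Nonempty) (ε : ℝ) (hε : 0 < ε) :
    ∃ S : Finset (Fin (n+1) → ℝ),
      A ⊆ ↑S + {x : Fin (n+1) → ℝ | ∑ i, |x i| ≤ ε} ∧
      (S.card : ℝ) ≤ ((2 * rademacherComplexity (n+1) A + ε) / ε) ^ (n+1) := by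
  set R := rademacherComplexity (n+1) A with hR
  set bound : ℝ := ((2 * R + ε) / ε) ^ (n+1) with hbound
  set Sep : Set ℕ := {k : ℕ | ∃ S : Finset (Fin (n+1) → ℝ), ↑S ⊆ A ∧ S.card = k ∧
    ∀ x ∈ S, ∀ y ∈ S, x ≠ y → ε < ∑ i, |x i - y i|} with hSep
  have h0 : 0 ∈ Sep := ⟨∅, by simp, by simp, by simp⟩
  have hbdd : BddAbove Sep := by
    refine ⟨Nat.ceil bound, fun k hk => ?_⟩
    obtain ⟨S, hSA, hcard, hsep⟩ := hk
    have := packing_bound n A hA ⟨_, hAne.choose_spec⟩ ε hε S hSA hsep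
    rw [hcard] at this
    exact_mod_cast this.trans (Nat.le_ceil bound)
  obtain ⟨S, hSA, hcard, hsep⟩ := Nat.sSup_mem ⟨0, h0⟩ hbdd
  have hSb : (S.card : ℝ) ≤ bound := packing_bound n A hA hAne ε hε S hSA hsep
  refine ⟨S, ?_, hSb⟩
  intro a ha
  by_contra hcov
  have hfar : ∀ y ∈ S, ε < ∑ i, |a i - y i| := by
    intro y hy
    by_contra hle
    push_neg at hle
    exact hcov ⟨y, hy, fun i => a i - y i, hle, by funext i; simp⟩
  have haS : a ∉ S := by
    intro haS
    have := hfar a haS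
    simp at this
    linarith
  have hmem : sSup Sep + 1 ∈ Sep := by
    refine ⟨insert a S, ?_, ?_, ?_⟩
    · intro x hx
      rcases Finset.mem_insert.mp (by exact_mod_cast hx) with h | h
      · exact h ▸ ha
      · exact hSA h
    · rw [Finset.card_insert_of_notMem haS, hcard]
    · intro x hx y hy hxy
      rcases Finset.mem_insert.mp hx with hx' | hx' <;>
        rcases Finset.mem_insert.mp hy with hy' | hy'
      · exact absurd (hx'.trans hy'.symm) hxy
      · exact hx' ▸ hfar y hy'
      · calc ε < ∑ i, |a i - x i| := hy' ▸ hfar x hx'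
          _ = ∑ i, |x i - y i| := by
            refine Finset.sum_congr rfl fun i _ => ?_
            rw [abs_sub_comm, hy']
      · exact hsep x hx' y hy' hxy
  have := le_csSup hbdd hmem
  omega

end RadMin


/-- Minoration of the Rademacher complexity via the `ℓ₁`-covering number:
`r(A) ≥ (ε/2)(N(A, εB₁)^{1/N} − 1) ≥ (ε/(2N)) log N(A, εB₁)`. -/
theorem rademacher_minoration_covering
    (N : ℕ) (hN : 0 < N) (A : Set (Fin N → ℝ)) (hA : IsCompact A) (hAne : A.Nonempty)
    (ε : ℝ) (hε : 0 < ε)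
    (B₁ : Set (Fin N → ℝ)) (hB₁ : B₁ = {x | ∑ i, |x i| ≤ 1}) :
    (ε / 2) * ((coveringNumber A (ε • B₁) : ℝ) ^ ((1 : ℝ) / N) - 1)
        ≤ rademacherComplexity N A ∧
    (ε / (2 * N)) * Real.log (coveringNumber A (ε • B₁))
        ≤ (ε / 2) * ((coveringNumber A (ε • B₁) : ℝ) ^ ((1 : ℝ) / N) - 1) := by
  obtain ⟨n, rfl⟩ : ∃ n, N = n + 1 := ⟨N - 1, (Nat.succ_pred_eq_of_pos hN).symm⟩
  set R := rademacherComplexity (n+1) A with hR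
  have hR0 : 0 ≤ R := RadMin.rademacher_nonneg (n+1) A hA hAne
  have hεB : ε • B₁ = {x : Fin (n+1) → ℝ | ∑ i, |x i| ≤ ε} := by
    rw [hB₁]
    ext x
    constructor
    · rintro ⟨b, hb, rfl⟩
      simp only [Set.mem_setOf_eq] at hb ⊢
      have : ∀ i, |(ε • b) i| = ε * |b i| := by
        intro i
        simp [abs_mul, abs_of_pos hε]
      calc ∑ i, |(ε • b) i| = ∑ i, ε * |b i| := Finset.sum_congr rfl fun i _ => this i
        _ = ε * ∑ i, |b i| := by rw [Finset.mul_sum]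
        _ ≤ ε * 1 := by nlinarith
        _ = ε := mul_one ε
    · intro hx
      refine ⟨ε⁻¹ • x, ?_, smul_inv_smul₀ (ne_of_gt hε) x⟩
      simp only [Set.mem_setOf_eq] at hx ⊢
      have : ∀ i, |(ε⁻¹ • x) i| = ε⁻¹ * |x i| := by
        intro i
        simp [abs_mul, abs_of_pos (inv_pos.mpr hε)]
      calc ∑ i, |(ε⁻¹ • x) i| = ε⁻¹ * ∑ i, |x i| := by
            rw [Finset.mul_sum]; exact Finset.sum_congr rfl fun i _ => this i
        _ ≤ ε⁻¹ * ε := by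
            have := inv_pos.mpr hε
            nlinarith
        _ = 1 := inv_mul_cancel₀ (ne_of_gt hε)
  obtain ⟨S, hScover, hScard⟩ := RadMin.exists_good_cover n A hA hAne ε hε
  set M := coveringNumber A (ε • B₁) with hM
  have hMS : M ≤ S.card := by
    apply Nat.sInf_le
    exact ⟨S, rfl, by rw [hεB]; exact hScover⟩
  have hM1 : 1 ≤ M := by
    by_contra h
    push_neg at h
    have hM0 : coveringNumber A (ε • B₁) = 0 := by omega
    have h0 : (0 : ℕ) ∈ {k : ℕ | ∃ S : Finset (Fin (n+1) → ℝ), S.card = k ∧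
        A ⊆ ↑S + ε • B₁} := by
      have hne : {k : ℕ | ∃ S : Finset (Fin (n+1) → ℝ), S.card = k ∧
          A ⊆ ↑S + ε • B₁}.Nonempty := ⟨S.card, S, rfl, by rw [hεB]; exact hScover⟩
      rcases (Nat.sInf_eq_zero.mp hM0) with h' | h'
      · exact h'
      · exact absurd h' (Set.nonempty_iff_ne_empty.mp hne)
    obtain ⟨S₀, hS₀card, hS₀cover⟩ := h0
    rw [Finset.card_eq_zero.mp hS₀card] at hS₀cover
    simp only [Finset.coe_empty, Set.empty_add] at hS₀cover
    exact absurd (hS₀cover hAne.choose_spec) (Set.notMem_empty _)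
  have hMreal : (M : ℝ) ≤ ((2 * R + ε) / ε) ^ (n+1) :=
    le_trans (Nat.cast_le.mpr hMS) hScard
  have hMpos : (0:ℝ) < (M : ℝ) := by exact_mod_cast hM1
  have hbpos : (0:ℝ) < (2 * R + ε) / ε := by positivity
  have hNcast : ((n+1 : ℕ) : ℝ) ≠ 0 := by positivity
  -- rpow bound
  have hrpow : (M : ℝ) ^ ((1 : ℝ) / ((n+1 : ℕ) : ℝ)) ≤ (2 * R + ε) / ε := by
    have h1 : (M : ℝ) ^ ((1 : ℝ) / ((n+1 : ℕ) : ℝ)) ≤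
        (((2 * R + ε) / ε) ^ (n+1)) ^ ((1 : ℝ) / ((n+1 : ℕ) : ℝ)) :=
      Real.rpow_le_rpow (le_of_lt hMpos) hMreal (by positivity)
    have h2 : (((2 * R + ε) / ε) ^ (n+1)) ^ ((1 : ℝ) / ((n+1 : ℕ) : ℝ)) = (2 * R + ε) / ε := by
      rw [← Real.rpow_natCast ((2 * R + ε) / ε) (n+1), ← Real.rpow_mul (le_of_lt hbpos)]
      rw [show ((n+1 : ℕ) : ℝ) * ((1 : ℝ) / ((n+1 : ℕ) : ℝ)) = 1 by field_simp]
      exact Real.rpow_one _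
    exact h2 ▸ h1
  have hsub : (M : ℝ) ^ ((1 : ℝ) / ((n+1 : ℕ) : ℝ)) - 1 ≤ 2 * R / ε := by
    have : (2 * R + ε) / ε = 2 * R / ε + 1 := by field_simp
    linarith
  constructor
  · calc (ε / 2) * ((M : ℝ) ^ ((1 : ℝ) / ((n+1 : ℕ) : ℝ)) - 1)
        ≤ (ε / 2) * (2 * R / ε) :=
          mul_le_mul_of_nonneg_left hsub (by linarith)
      _ = R := by field_simp
  · have hx : (0:ℝ) < (M : ℝ) ^ ((1 : ℝ) / ((n+1 : ℕ) : ℝ)) :=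
      Real.rpow_pos_of_pos hMpos _
    have hlog : ((1 : ℝ) / ((n+1 : ℕ) : ℝ)) * Real.log M ≤
        (M : ℝ) ^ ((1 : ℝ) / ((n+1 : ℕ) : ℝ)) - 1 := by
      have h3 := Real.log_le_sub_one_of_pos hx
      rw [Real.log_rpow hMpos] at h3
      exact h3
    calc (ε / (2 * ((n+1 : ℕ) : ℝ))) * Real.log M
        = (ε / 2) * (((1 : ℝ) / ((n+1 : ℕ) : ℝ)) * Real.log M) := by
          field_simp
      _ ≤ (ε / 2) * ((M : ℝ) ^ ((1 : ℝ) / ((n+1 : ℕ) : ℝ)) - 1) :=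
          mul_le_mul_of_nonneg_left hlog (by linarith)
end

section
/- Let t be a power of 2 and let A_t be a t×t Hadamard matrix (so A_tᵀA_t = t I_t). Let R ⊆ ℝ^t be the set of 2t signed standard basis vectors ±e_1,...,±e_t. Then every point of A_t R lies in [−1,1]^t, and t^{−1/2}[−1,1]^t ⊆ conv(A_t R). -/
/-- The ℓ¹ unit ball is in the convex hull of the signed basis vectors. -/
lemma crossPolytope_subset_hull (t : ℕ) (y : Fin t → ℝ)
    (hy : ∑ i, |y i| ≤ 1) (htpos : 0 < t) :
    y ∈ convexHull ℝ {x : Fin t → ℝ | ∃ i : Fin t,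
      x = Pi.single i 1 ∨ x = Pi.single i (-1)} := by
  classical
  set s : ℝ := 1 - ∑ i, |y i| with hs
  have hs0 : 0 ≤ s := by simp [hs]; linarith
  set w : Fin t × Bool → ℝ := fun p =>
    (if p.2 then (|y p.1| + y p.1) / 2 else (|y p.1| - y p.1) / 2) + s / (2 * t)
  set z : Fin t × Bool → (Fin t → ℝ) := fun p =>
    Pi.single p.1 (if p.2 then (1 : ℝ) else -1)
  have htne : (t : ℝ) ≠ 0 := Nat.cast_ne_zero.mpr htpos.ne'
  have hw0 : ∀ p ∈ (Finset.univ : Finset (Fin t × Bool)), 0 ≤ w p := by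
    rintro ⟨i, b⟩ _
    have h2 : 0 ≤ s / (2 * t) := by positivity
    cases b
    · have h1 : 0 ≤ (|y i| - y i) / 2 := by linarith [le_abs_self (y i)]
      simpa [w] using add_nonneg h1 h2
    · have h1 : 0 ≤ (|y i| + y i) / 2 := by linarith [neg_abs_le (y i)]
      simpa [w] using add_nonneg h1 h2
  have hwsum : ∑ p : Fin t × Bool, w p = 1 := by
    rw [Fintype.sum_prod_type]
    have hrow : ∀ i : Fin t, ∑ b : Bool, w (i, b) = |y i| + s / t := by
      intro i
      simp only [Fintype.sum_bool, w, eq_self_iff_true, if_true, Bool.false_eq_true, if_false, ↓reduceIte]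
      field_simp
      ring
    rw [Finset.sum_congr rfl (fun i _ => hrow i), Finset.sum_add_distrib,
      Finset.sum_const, Finset.card_univ, Fintype.card_fin, nsmul_eq_mul]
    have h2 : (t : ℝ) * (s / t) = s := by field_simp
    rw [h2, hs]; ring
  have hmem : ∀ p ∈ (Finset.univ : Finset (Fin t × Bool)),
      z p ∈ {x : Fin t → ℝ | ∃ i : Fin t, x = Pi.single i 1 ∨ x = Pi.single i (-1)} := by
    rintro ⟨i, b⟩ _
    refine ⟨i, ?_⟩
    cases b
    · right; simp [z]
    · left; simp [z]
  have := Finset.centerMass_mem_convexHull (Finset.univ : Finset (Fin t × Bool)) hw0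
    (by rw [hwsum]; norm_num) hmem
  rwa [Finset.centerMass_eq_of_sum_1 _ _ hwsum, show ∑ p : Fin t × Bool, w p • z p = y from ?_]
    at this
  rw [Fintype.sum_prod_type]
  simp only [Fintype.sum_bool]
  have key : ∀ i : Fin t, w (i, true) • z (i, true) + w (i, false) • z (i, false)
      = Pi.single i (y i) := by
    intro i
    ext j
    by_cases hj : j = i
    · subst hj
      simp [w, z, Pi.single_apply]
      ring
    · simp [w, z, Pi.single_apply, hj]
  rw [Finset.sum_congr rfl (fun i _ => key i)]
  ext j
  simp [Finset.sum_apply, Pi.single_apply]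

/-- Let `t` be a power of 2 and `A` a `t×t` Hadamard matrix (entries `±1`,
`Aᵀ A = t I`).  Let `R` be the set of `2t` signed standard basis vectors
`±e₁, …, ±e_t` of `ℝ^t`.  Then every point of `A · R` lies in `[-1,1]^t`, and
`t^{-1/2}·[-1,1]^t ⊆ conv(A · R)`. -/
theorem hadamard_image_of_cross_polytope
    (t : ℕ) (ht : ∃ k : ℕ, t = 2 ^ k)
    (A : Matrix (Fin t) (Fin t) ℝ)
    (hentries : ∀ i j, A i j = 1 ∨ A i j = -1)
    (horth : A.transpose * A = (t : ℝ) • 1)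
    (R : Set (Fin t → ℝ))
    (hR : R = {x | ∃ i : Fin t, x = Pi.single i 1 ∨ x = Pi.single i (-1)}) :
    (∀ v ∈ A.mulVec '' R, ∀ j, |v j| ≤ 1) ∧
    ∀ x : Fin t → ℝ, (∀ j, |x j| ≤ (Real.sqrt t)⁻¹) →
      x ∈ convexHull ℝ (A.mulVec '' R) := by
  classical
  obtain ⟨k, hk⟩ := ht
  have htpos : 0 < t := hk ▸ pow_pos (by norm_num : (0:ℕ) < 2) k -- may need fix
  have htne : (t : ℝ) ≠ 0 := Nat.cast_ne_zero.mpr htpos.ne'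
  have htR : (0 : ℝ) < t := by exact_mod_cast htpos
  have habs : ∀ i j, |A i j| = 1 := by
    intro i j; rcases hentries i j with h | h <;> simp [h]
  constructor
  · rintro v ⟨r, hr, rfl⟩ j
    rw [hR] at hr
    obtain ⟨i, hi | hi⟩ := hr <;> subst hi <;> simp [Matrix.mulVec_single, habs]
  · intro x hx
    -- B := t⁻¹ • Aᵀ is the inverse of A
    set B : Matrix (Fin t) (Fin t) ℝ := (t : ℝ)⁻¹ • A.transpose with hB
    have hBA : B * A = 1 := by
      rw [hB, Matrix.smul_mul, horth, smul_smul, inv_mul_cancel₀ htne, one_smul]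
    have hAB : A * B = 1 := mul_eq_one_comm.mpr hBA
    set y : Fin t → ℝ := B.mulVec x with hy
    have hxy : A.mulVec y = x := by
      rw [hy, Matrix.mulVec_mulVec, hAB, Matrix.one_mulVec]
    -- norm computation: ∑ y i ^ 2 = (∑ x j ^ 2) / t
    have hdot : ∑ j, x j * x j = (t : ℝ) * ∑ i, y i * y i := by
      have h1 : dotProduct x x = dotProduct (A.mulVec y) (A.mulVec y) := by rw [hxy]
      rw [Matrix.dotProduct_mulVec, ← Matrix.mulVec_transpose, Matrix.mulVec_mulVec,
        horth] at h1
      simpa [dotProduct, Matrix.smul_mulVec, Matrix.one_mulVec,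
        Finset.mul_sum, mul_assoc] using h1
    have hx2 : ∑ j, x j * x j ≤ 1 := by
      have : ∀ j, x j * x j ≤ (t : ℝ)⁻¹ := by
        intro j
        have h1 : |x j| ≤ (Real.sqrt t)⁻¹ := hx j
        have h2 : x j * x j = |x j| * |x j| := (abs_mul_abs_self _).symm
        rw [h2]
        calc |x j| * |x j| ≤ (Real.sqrt t)⁻¹ * (Real.sqrt t)⁻¹ :=
              mul_le_mul h1 h1 (abs_nonneg _) (by positivity)
          _ = (t : ℝ)⁻¹ := by
              rw [← mul_inv, Real.mul_self_sqrt htR.le]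
      calc ∑ j, x j * x j ≤ ∑ _j : Fin t, (t : ℝ)⁻¹ :=
            Finset.sum_le_sum fun j _ => this j
        _ = 1 := by
            rw [Finset.sum_const, Finset.card_univ, Fintype.card_fin, nsmul_eq_mul]
            field_simp
    have hy2 : ∑ i, y i * y i ≤ (t : ℝ)⁻¹ := by
      rw [hdot] at hx2
      rw [← mul_le_mul_iff_right₀ htR]
      calc (t:ℝ) * ∑ i, y i * y i ≤ 1 := hx2
        _ = (t:ℝ) * (t:ℝ)⁻¹ := by field_simp
    -- Cauchy-Schwarz
    have hcs : (∑ i, |y i|) ^ 2 ≤ (t : ℝ) * ∑ i, |y i| ^ 2 := by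
      have := sq_sum_le_card_mul_sum_sq (s := (Finset.univ : Finset (Fin t)))
        (f := fun i => |y i|)
      simpa [Finset.card_univ, Fintype.card_fin] using this
    have hy1 : ∑ i, |y i| ≤ 1 := by
      have h1 : (∑ i, |y i|) ^ 2 ≤ 1 := by
        calc (∑ i, |y i|) ^ 2 ≤ (t : ℝ) * ∑ i, |y i| ^ 2 := hcs
          _ = (t : ℝ) * ∑ i, y i * y i := by
              congr 1; apply Finset.sum_congr rfl; intro i _
              rw [sq, abs_mul_abs_self]
          _ ≤ (t : ℝ) * (t : ℝ)⁻¹ := by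
              exact mul_le_mul_of_nonneg_left hy2 htR.le
          _ = 1 := by field_simp
      nlinarith [Finset.sum_nonneg (fun i (_ : i ∈ Finset.univ) => abs_nonneg (y i))]
    have hyhull : y ∈ convexHull ℝ R := by
      rw [hR]; exact crossPolytope_subset_hull t y hy1 htpos
    have himg : A.mulVec '' (convexHull ℝ R) = convexHull ℝ (A.mulVec '' R) := by
      have := A.mulVecLin.image_convexHull R
      exact this
    rw [← himg]
    exact ⟨y, hyhull, hxy⟩
end

section
/- Let d_1,...,d_n be nonnegative integers with N := d_1+...+d_n, let each C_i be a nondegenerate linear image of [−1,1]^{d_i}, and let t be a power of 2. Then there exists a finite set S_n ⊆ C_1 × ... × C_n with |S_n| = (2t)^{⌊N/t⌋} · 2^{N − ⌊N/t⌋ t} such that (1/√t)·(C_1 × ... × C_n) ⊆ conv(S_n). -/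
open Set

lemma hadamard_exists (k : ℕ) :
    ∃ S : Finset ((Fin k → Bool) → ℝ),
      (↑S : Set ((Fin k → Bool) → ℝ)) ⊆ {x | ∀ j, |x j| ≤ 1} ∧
      S.card = 2 * 2 ^ k ∧
      ∀ x : (Fin k → Bool) → ℝ, (∀ j, |x j| ≤ 1) →
        (Real.sqrt (2 ^ k))⁻¹ • x ∈ convexHull ℝ (↑S : Set ((Fin k → Bool) → ℝ)) := by
  set I := (Fin k → Bool)
  have hcardI : Fintype.card I = 2 ^ k := by simp [I, Fintype.card_fun]
  set v : I → I → ℝ := fun a c => ∏ i, (if a i && c i then (-1 : ℝ) else 1) with hv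
  have habs : ∀ a c, |v a c| = 1 := by
    intro a c
    rw [hv]
    rw [Finset.abs_prod]
    refine Finset.prod_eq_one fun i _ => ?_
    by_cases h : a i && c i <;> simp [h]
  have hsymm : ∀ a c, v a c = v c a := by
    intro a c
    exact Finset.prod_congr rfl fun i _ => by rw [Bool.and_comm]
  -- orthogonality
  have hdot : ∀ a b : I, ∑ c, v a c * v b c = if a = b then (2 ^ k : ℝ) else 0 := by
    intro a b
    have h1 : ∀ c : I, v a c * v b c =
        ∏ i, ((if a i && c i then (-1 : ℝ) else 1) * (if b i && c i then (-1 : ℝ) else 1)) := by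
      intro c; rw [hv]; exact Finset.prod_mul_distrib.symm
    have h2 : ∑ c : I, v a c * v b c =
        ∏ i, ∑ y : Bool, ((if a i && y then (-1 : ℝ) else 1) * (if b i && y then (-1 : ℝ) else 1)) := by
      rw [Finset.prod_univ_sum (fun _ => (Finset.univ : Finset Bool))]
      rw [Fintype.piFinset_univ]
      exact Finset.sum_congr rfl fun c _ => h1 c
    rw [h2]
    have h3 : ∀ i : Fin k, ∑ y : Bool,
        ((if a i && y then (-1 : ℝ) else 1) * (if b i && y then (-1 : ℝ) else 1)) =
        if a i = b i then 2 else 0 := by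
      intro i
      rcases Bool.dichotomy (a i) with h | h <;> rcases Bool.dichotomy (b i) with h' | h' <;>
        simp [h, h', Fintype.sum_bool] <;> norm_num
    rw [Finset.prod_congr rfl fun i _ => h3 i]
    by_cases hab : a = b
    · subst hab
      simp [Finset.prod_const]
    · obtain ⟨i, hi⟩ : ∃ i, a i ≠ b i := by
        by_contra h; push_neg at h; exact hab (funext h)
      rw [if_neg hab]
      exact Finset.prod_eq_zero (Finset.mem_univ i) (by simp [hi])
  have htpos : (0:ℝ) < 2 ^ k := by positivity
  -- reconstruction
  have hrec : ∀ (x : I → ℝ) (j : I), ∑ a, (∑ i, v a i * x i) * v a j = 2 ^ k * x j := by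
    intro x j
    have : ∀ a : I, (∑ i, v a i * x i) * v a j = ∑ i, x i * (v a i * v a j) := by
      intro a; rw [Finset.sum_mul]; exact Finset.sum_congr rfl fun i _ => by ring
    rw [Finset.sum_congr rfl fun a _ => this a, Finset.sum_comm]
    have : ∀ i : I, ∑ a, x i * (v a i * v a j) = x i * (if i = j then (2:ℝ) ^ k else 0) := by
      intro i
      rw [← Finset.mul_sum]
      congr 1
      calc ∑ a, v a i * v a j = ∑ a, v i a * v j a :=
            Finset.sum_congr rfl fun a _ => by rw [hsymm a i, hsymm a j]
        _ = _ := hdot i j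
    rw [Finset.sum_congr rfl fun i _ => this i]
    simp [Finset.sum_ite_eq' Finset.univ j, mul_comm]
  -- the l^1 bound on coefficients
  have hl1 : ∀ x : I → ℝ, (∀ j, |x j| ≤ 1) →
      ∑ a, |∑ i, v a i * x i| ≤ 2 ^ k * Real.sqrt (2 ^ k) := by
    intro x hx
    set D : I → ℝ := fun a => ∑ i, v a i * x i with hD
    have hsq : ∑ a, D a ^ 2 = 2 ^ k * ∑ i, x i ^ 2 := by
      have e1 : ∀ a : I, D a ^ 2 = ∑ i, x i * (v a i * D a) := by
        intro a
        calc D a ^ 2 = ∑ i, (v a i * x i) * D a := by rw [← Finset.sum_mul]; simp only [hD]; ring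
          _ = ∑ i, x i * (v a i * D a) := Finset.sum_congr rfl fun i _ => by ring
      rw [Finset.sum_congr rfl fun a _ => e1 a, Finset.sum_comm]
      have e2 : ∀ i : I, ∑ a, x i * (v a i * D a) = x i * (2 ^ k * x i) := by
        intro i
        rw [← Finset.mul_sum]
        congr 1
        calc ∑ a, v a i * D a = ∑ a, D a * v a i := Finset.sum_congr rfl fun a _ => by ring
          _ = 2 ^ k * x i := hrec x i
      rw [Finset.sum_congr rfl fun i _ => e2 i, Finset.mul_sum]
      exact Finset.sum_congr rfl fun i _ => by ring
    have hx2 : ∑ i, x i ^ 2 ≤ (2 ^ k : ℝ) := by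
      calc ∑ i : I, x i ^ 2 ≤ ∑ _i : I, (1:ℝ) :=
            Finset.sum_le_sum fun i _ => (sq_le_one_iff_abs_le_one _).2 (hx i)
        _ = (2 ^ k : ℝ) := by simp [hcardI]
    have hcs : (∑ a, |D a|) ^ 2 ≤ (2:ℝ) ^ k * ∑ a, D a ^ 2 := by
      have := sq_sum_le_card_mul_sum_sq (s := (Finset.univ : Finset I)) (f := fun a => |D a|)
      simp only [Finset.card_univ, hcardI, sq_abs] at this
      calc (∑ a, |D a|) ^ 2 ≤ ((2^k : ℕ) : ℝ) * ∑ a, D a ^ 2 := this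
        _ = (2:ℝ) ^ k * ∑ a, D a ^ 2 := by push_cast; ring
    have hbound : (∑ a, |D a|) ^ 2 ≤ ((2:ℝ) ^ k * Real.sqrt (2 ^ k)) ^ 2 := by
      have h1 : ((2:ℝ) ^ k * Real.sqrt (2 ^ k)) ^ 2 = 2 ^ k * (2 ^ k * 2 ^ k) := by
        rw [mul_pow, Real.sq_sqrt htpos.le]; ring
      calc (∑ a, |D a|) ^ 2 ≤ (2:ℝ) ^ k * ∑ a, D a ^ 2 := hcs
        _ ≤ (2:ℝ) ^ k * (2 ^ k * (2 ^ k : ℝ)) := by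
            refine mul_le_mul_of_nonneg_left ?_ htpos.le
            calc ∑ a, D a ^ 2 = 2 ^ k * ∑ i, x i ^ 2 := hsq
              _ ≤ 2 ^ k * (2 ^ k : ℝ) := mul_le_mul_of_nonneg_left hx2 htpos.le
        _ = ((2:ℝ) ^ k * Real.sqrt (2 ^ k)) ^ 2 := h1.symm
    have h0 : (0:ℝ) ≤ ∑ a, |D a| := Finset.sum_nonneg fun a _ => abs_nonneg _
    have h0' : (0:ℝ) ≤ 2 ^ k * Real.sqrt (2 ^ k) := by positivity
    exact le_of_pow_le_pow_left₀ two_ne_zero h0' hbound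
  -- the point set
  set P : I × Bool → (I → ℝ) := fun p => if p.2 then v p.1 else -v p.1 with hP
  have key_ne : ∀ a b : I, v a ≠ -v b := by
    intro a b hab
    have h1 : ∑ c, v a c * v b c = -(2 ^ k : ℝ) := by
      calc ∑ c, v a c * v b c = ∑ c, -(v b c * v b c) :=
            Finset.sum_congr rfl fun c _ => by rw [congrFun hab c, Pi.neg_apply]; ring
        _ = -∑ c, v b c * v b c := by rw [Finset.sum_neg_distrib]
        _ = -(2 ^ k : ℝ) := by rw [hdot b b]; simp
    rw [hdot] at h1
    by_cases hab' : a = b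
    · rw [if_pos hab'] at h1; linarith
    · rw [if_neg hab'] at h1; linarith
  have key_eq : ∀ a b : I, v a = v b → a = b := by
    intro a b hab
    by_contra hne
    have h1 : ∑ c, v a c * v b c = (2 ^ k : ℝ) := by
      calc ∑ c, v a c * v b c = ∑ c, v b c * v b c := by rw [hab]
        _ = (2 ^ k : ℝ) := by rw [hdot b b]; simp
    rw [hdot, if_neg hne] at h1; linarith
  have hinj : Function.Injective P := by
    rintro ⟨a, sa⟩ ⟨b, sb⟩ h
    rw [hP] at h
    cases sa <;> cases sb <;> simp only [if_true, if_false, Bool.false_eq_true] at h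
    · exact Prod.ext (key_eq a b (neg_injective h)) rfl
    · exact absurd h.symm (key_ne b a)
    · exact absurd h (key_ne a b)
    · exact Prod.ext (key_eq a b h) rfl
  refine ⟨Finset.image P Finset.univ, ?_, ?_, ?_⟩
  · intro y hy
    simp only [Finset.coe_image, Finset.coe_univ, Set.image_univ, Set.mem_range] at hy
    obtain ⟨p, rfl⟩ := hy
    intro j
    rw [hP]
    cases hb : p.2 <;>
      simp only [hb, if_true, if_false, Bool.false_eq_true, Pi.neg_apply, abs_neg] <;>
      exact le_of_eq (habs _ _)
  · rw [Finset.card_image_of_injective _ hinj, Finset.card_univ, Fintype.card_prod,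
      Fintype.card_bool, hcardI]
    ring
  · intro x hx
    set s := Real.sqrt (2 ^ k) with hs
    have hspos : (0:ℝ) < s := Real.sqrt_pos.2 htpos
    have hts : (0:ℝ) < 2 ^ k * s := by positivity
    set D : I → ℝ := fun a => ∑ i, v a i * x i with hD
    set c : I → ℝ := fun a => D a / (2 ^ k * s) with hc
    have hcsum : ∑ a, |c a| ≤ 1 := by
      have : ∑ a, |c a| = (∑ a, |D a|) / (2 ^ k * s) := by
        rw [Finset.sum_div]
        refine Finset.sum_congr rfl fun a _ => ?_
        rw [hc, abs_div, abs_of_pos hts]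
      rw [this, div_le_one hts]
      exact hl1 x hx
    set δ : ℝ := (1 - ∑ a, |c a|) / (2 * 2 ^ k) with hδ
    have hδ0 : 0 ≤ δ := by
      apply div_nonneg (by linarith) (by positivity)
    set w : I × Bool → ℝ := fun p => (|c p.1| + (if p.2 then c p.1 else -c p.1)) / 2 + δ with hw
    have hw0 : ∀ p, 0 ≤ w p := by
      rintro ⟨a, sa⟩
      rw [hw]
      have h1 : 0 ≤ |c a| + (if sa then c a else -c a) := by
        cases sa <;> simp only [if_true, if_false, Bool.false_eq_true]
        · linarith [le_abs_self (c a)]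
        · linarith [neg_abs_le (c a)]
      positivity
    have hws : ∑ p, w p = 1 := by
      rw [Fintype.sum_prod_type]
      have h1 : ∀ a : I, ∑ σ : Bool, w (a, σ) = |c a| + 2 * δ := by
        intro a
        rw [Fintype.sum_bool, hw]
        simp only [if_true, if_false, Bool.false_eq_true]
        ring
      rw [Finset.sum_congr rfl fun a _ => h1 a, Finset.sum_add_distrib, Finset.sum_const,
        Finset.card_univ, hcardI, hδ]
      have h2 : (2:ℝ) * 2 ^ k ≠ 0 := by positivity
      have h4 : ((2:ℝ) ^ k)⁻¹ * 2 ^ k = 1 := inv_mul_cancel₀ (by positivity)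
      field_simp
      linear_combination (1 - ∑ a, |c a|) * h4
    have hsum_eq : ∑ p, w p • P p = s⁻¹ • x := by
      rw [Fintype.sum_prod_type]
      have h1 : ∀ a : I, ∑ σ : Bool, w (a, σ) • P (a, σ) = c a • v a := by
        intro a
        rw [Fintype.sum_bool, hP, hw]
        simp only [if_true, if_false, Bool.false_eq_true]
        rw [smul_neg, ← sub_eq_add_neg, ← sub_smul]
        congr 1
        ring
      rw [Finset.sum_congr rfl fun a _ => h1 a]
      funext j
      rw [Finset.sum_apply, Pi.smul_apply, smul_eq_mul]
      have : ∀ a : I, (c a • v a) j = (D a * v a j) / (2 ^ k * s) := by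
        intro a
        rw [Pi.smul_apply, smul_eq_mul, hc]
        ring
      rw [Finset.sum_congr rfl fun a _ => this a, ← Finset.sum_div]
      have : ∑ a, D a * v a j = 2 ^ k * x j := by
        rw [hD]; exact hrec x j
      rw [this]
      field_simp
    have hPmem : ∀ p : I × Bool, P p ∈ (↑(Finset.image P Finset.univ) : Set (I → ℝ)) := by
      intro p
      simp only [Finset.coe_image, Finset.coe_univ, Set.image_univ, Set.mem_range]
      exact ⟨p, rfl⟩
    have hmem := Finset.centerMass_mem_convexHull (Finset.univ : Finset (I × Bool))
      (fun p _ => hw0 p) (by rw [hws]; norm_num) (fun p _ => hPmem p)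
    rw [Finset.centerMass_eq_of_sum_1 _ _ hws, hsum_eq] at hmem
    exact hmem


/-- Sampling from a product of cubes (via Hadamard matrices).  Let `d₁, …, dₙ` be
nonnegative integers with `N = d₁ + ⋯ + dₙ`, let each `Cᵢ` be a nondegenerate linear
image of `[-1,1]^{dᵢ}`, and let `t` be a power of 2.  Then there is a finite set
`Sₙ ⊆ C₁ × ⋯ × Cₙ` with `|Sₙ| = (2t)^{⌊N/t⌋} · 2^{N − ⌊N/t⌋t}` such that
`(1/√t)·(C₁ × ⋯ × Cₙ) ⊆ conv(Sₙ)`. -/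
theorem sampling_from_polytope
    (n : ℕ) (d : Fin n → ℕ) (N : ℕ) (hN : N = ∑ i, d i)
    (t : ℕ) (ht : ∃ k : ℕ, t = 2 ^ k)
    (L : ∀ i : Fin n, (Fin (d i) → ℝ) ≃ₗ[ℝ] (Fin (d i) → ℝ))
    (C : ∀ i : Fin n, Set (Fin (d i) → ℝ))
    (hC : ∀ i, C i = ⇑(L i) '' {x | ∀ j, |x j| ≤ 1}) :
    ∃ S : Finset (∀ i : Fin n, Fin (d i) → ℝ),
      (↑S : Set (∀ i : Fin n, Fin (d i) → ℝ)) ⊆ Set.univ.pi C ∧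
      S.card = (2 * t) ^ (N / t) * 2 ^ (N - (N / t) * t) ∧
      ∀ x ∈ Set.univ.pi C, (Real.sqrt t)⁻¹ • x ∈ convexHull ℝ (↑S) := by
  obtain ⟨k, rfl⟩ := ht
  set t := 2 ^ k with htdef
  set q := N / t with hq
  set r := N - q * t with hr
  have hqt : q * t ≤ N := Nat.div_mul_le_self N t
  set m : Fin q ⊕ Fin r → ℕ := Sum.elim (fun _ => k) (fun _ => 0) with hm
  choose S₀ hsub₀ hcard₀ hconv₀ using fun j : Fin q ⊕ Fin r => hadamard_exists (m j)
  -- the uniform per-factor convex hull property with the global scaling constant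
  have hsqrt1 : (1:ℝ) ≤ Real.sqrt t := by
    rw [Real.one_le_sqrt]
    exact_mod_cast Nat.one_le_two_pow
  have hconv : ∀ (j : Fin q ⊕ Fin r) (y : (Fin (m j) → Bool) → ℝ), (∀ a, |y a| ≤ 1) →
      (Real.sqrt t)⁻¹ • y ∈ convexHull ℝ (↑(S₀ j) : Set ((Fin (m j) → Bool) → ℝ)) := by
    have hcast : ((t : ℕ) : ℝ) = (2:ℝ) ^ k := by rw [htdef]; push_cast; ring
    rintro (a | b) y hy
    · have := hconv₀ (Sum.inl a) y hy
      rw [hcast]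
      exact this
    · have hinv0 : (0:ℝ) ≤ (Real.sqrt t)⁻¹ := by positivity
      have hinv1 : (Real.sqrt t)⁻¹ ≤ 1 := inv_le_one_of_one_le₀ hsqrt1
      have hy' : ∀ a, |((Real.sqrt t)⁻¹ • y) a| ≤ 1 := by
        intro a
        rw [Pi.smul_apply, smul_eq_mul, abs_mul, abs_of_nonneg hinv0]
        calc (Real.sqrt t)⁻¹ * |y a| ≤ 1 * 1 :=
              mul_le_mul hinv1 (hy a) (abs_nonneg _) zero_le_one
          _ = 1 := one_mul 1
      have h5 := hconv₀ (Sum.inr b) ((Real.sqrt t)⁻¹ • y) hy'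
      have h6 : (Real.sqrt ((2:ℝ) ^ (0:ℕ)))⁻¹ • ((Real.sqrt t)⁻¹ • y) ∈
          convexHull ℝ (↑(S₀ (Sum.inr b)) : Set ((Fin (m (Sum.inr b)) → Bool) → ℝ)) := h5
      simpa using h6
  -- cardinality of the sigma type
  have hcard1 : Fintype.card (Σ j : Fin q ⊕ Fin r, (Fin (m j) → Bool)) = N := by
    rw [Fintype.card_sigma, Fintype.sum_sum_type]
    simp only [hm, Sum.elim_inl, Sum.elim_inr, Fintype.card_fun, Fintype.card_bool,
      Fintype.card_fin, Finset.sum_const, Finset.card_univ, smul_eq_mul, pow_zero, mul_one]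
    rw [← htdef]
    omega
  have hcard2 : Fintype.card (Σ i : Fin n, Fin (d i)) = N := by
    simp [Fintype.card_sigma, hN]
  set ε : (Σ j : Fin q ⊕ Fin r, (Fin (m j) → Bool)) ≃ (Σ i : Fin n, Fin (d i)) :=
    Fintype.equivOfCardEq (hcard1.trans hcard2.symm) with hε
  set Φ : (∀ i : Fin n, Fin (d i) → ℝ) ≃ₗ[ℝ] (∀ j : Fin q ⊕ Fin r, (Fin (m j) → Bool) → ℝ) :=
    (LinearEquiv.piCongrRight fun i => (L i).symm).trans
      ((LinearEquiv.piCurry ℝ fun (i : Fin n) (_ : Fin (d i)) => ℝ).symm.trans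
        ((LinearEquiv.funCongrLeft ℝ ℝ ε).trans
          (LinearEquiv.piCurry ℝ fun (j : Fin q ⊕ Fin r) (_ : Fin (m j) → Bool) => ℝ))) with hΦ
  have hΦapp : ∀ (x : ∀ i : Fin n, Fin (d i) → ℝ) (j : Fin q ⊕ Fin r) (a : Fin (m j) → Bool),
      Φ x j a = (L (ε ⟨j, a⟩).1).symm (x (ε ⟨j, a⟩).1) (ε ⟨j, a⟩).2 := fun _ _ _ => rfl
  -- the key membership characterization
  have key : ∀ x : ∀ i : Fin n, Fin (d i) → ℝ,
      x ∈ Set.univ.pi C ↔ ∀ (j : Fin q ⊕ Fin r) (a : Fin (m j) → Bool), |Φ x j a| ≤ 1 := by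
    intro x
    have h1 : x ∈ Set.univ.pi C ↔ ∀ i, ∀ b : Fin (d i), |(L i).symm (x i) b| ≤ 1 := by
      rw [Set.mem_univ_pi]
      refine forall_congr' fun i => ?_
      rw [hC i, LinearEquiv.image_eq_preimage_symm]
      exact Iff.rfl
    rw [h1,
      ← Sigma.forall (p := fun p : Σ i : Fin n, Fin (d i) => |(L p.1).symm (x p.1) p.2| ≤ 1),
      Equiv.forall_congr_left (e := ε.symm)]
    exact Sigma.forall
  -- assemble
  refine ⟨(Fintype.piFinset S₀).image Φ.symm, ?_, ?_, ?_⟩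
  · intro y hy
    simp only [Finset.coe_image, Set.mem_image, Finset.mem_coe] at hy
    obtain ⟨z, hz, rfl⟩ := hy
    rw [Fintype.mem_piFinset] at hz
    refine (key _).2 fun j a => ?_
    have : Φ (Φ.symm z) = z := Φ.apply_symm_apply z
    rw [this]
    exact hsub₀ j (hz j) a
  · rw [Finset.card_image_of_injective _ Φ.symm.injective, Fintype.card_piFinset]
    calc ∏ j, (S₀ j).card = ∏ j, 2 * 2 ^ (m j) := Finset.prod_congr rfl fun j _ => hcard₀ j
      _ = (2 * t) ^ q * 2 ^ r := by
          rw [Fintype.prod_sum_type]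
          simp only [hm, Sum.elim_inl, Sum.elim_inr, pow_zero, mul_one, Finset.prod_const,
            Finset.card_univ, Fintype.card_fin]
          rfl
      _ = (2 * t) ^ (N / t) * 2 ^ (N - N / t * t) := by rw [← hq, ← hr]
  · intro x hx
    have hx' := (key x).1 hx
    have hmem : ∀ j, ((Real.sqrt t)⁻¹ • Φ x) j ∈ convexHull ℝ (↑(S₀ j) : Set _) := by
      intro j
      exact hconv j (Φ x j) (hx' j)
    have h2 : Φ ((Real.sqrt t)⁻¹ • x) ∈
        convexHull ℝ (↑(Fintype.piFinset S₀) : Set (∀ j : Fin q ⊕ Fin r, (Fin (m j) → Bool) → ℝ)) := by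
      rw [Fintype.coe_piFinset, convexHull_pi, map_smul]
      exact fun j _ => hmem j
    have h3 : (Real.sqrt t)⁻¹ • x = Φ.symm (Φ ((Real.sqrt t)⁻¹ • x)) := (Φ.symm_apply_apply _).symm
    rw [h3]
    have h4 := Φ.symm.toLinearMap.image_convexHull
      (↑(Fintype.piFinset S₀) : Set (∀ j : Fin q ⊕ Fin r, (Fin (m j) → Bool) → ℝ))
    simp only [LinearEquiv.coe_toLinearMap, LinearEquiv.coe_coe] at h4
    rw [Finset.coe_image, ← h4]
    exact Set.mem_image_of_mem _ h2
end

section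
/- Let P_{Y|X} be a channel with finite alphabets. Then sup_{P_X} inf_{Q_Y} D(P_{Y|X} ‖ Q_Y | P_X) = inf_{Q_Y} sup_{P_X} D(P_{Y|X} ‖ Q_Y | P_X) = inf_{Q_Y} sup_{x∈X} D(P_{Y|X=x} ‖ Q_Y), and moreover the minimizing output distribution Q_Y (the capacity-achieving output distribution) is unique. -/
open scoped BigOperators

/-- Kullback–Leibler divergence `D(p‖q)` between two finitely supported distributions,
valued in `EReal` (it is `⊤` when `p` is not absolutely continuous w.r.t. `q`, and the
terms with `p y = 0` contribute `0`). -/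
noncomputable def klDiv {Y : Type} [Fintype Y] (p q : Y → ℝ) : EReal :=
  if ∀ y, q y = 0 → p y = 0 then
    ((∑ y, if p y = 0 then 0 else p y * Real.log (p y / q y) : ℝ) : EReal)
  else ⊤

/-- The probability simplex on a finite alphabet. -/
def probSimplex (α : Type) [Fintype α] : Set (α → ℝ) :=
  {p | (∀ a, 0 ≤ p a) ∧ ∑ a, p a = 1}

namespace CapAux

open Finset Real

variable {X Y : Type} [Fintype X] [Fintype Y]

noncomputable def Dreal {Y : Type} [Fintype Y] (p q : Y → ℝ) : ℝ :=
  ∑ y, p y * Real.log (p y / q y)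

lemma klDiv_eq_ite (p q : Y → ℝ) :
    klDiv p q = if ∀ y, q y = 0 → p y = 0 then ((Dreal p q : ℝ) : EReal) else ⊤ := by
  have h : (∑ y, if p y = 0 then 0 else p y * Real.log (p y / q y)) = Dreal p q := by
    refine Finset.sum_congr rfl fun y _ => ?_
    split_ifs with h <;> simp [h, Dreal]
  rw [klDiv, h]

lemma klDiv_eq_coe {p q : Y → ℝ} (h : ∀ y, q y = 0 → p y = 0) :
    klDiv p q = ((Dreal p q : ℝ) : EReal) := by rw [klDiv_eq_ite, if_pos h]

lemma klDiv_eq_top {p q : Y → ℝ} (h : ¬ ∀ y, q y = 0 → p y = 0) :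
    klDiv p q = ⊤ := by rw [klDiv_eq_ite, if_neg h]

lemma ecoe_sum {ι : Type*} (s : Finset ι) (f : ι → ℝ) :
    ((∑ i ∈ s, f i : ℝ) : EReal) = ∑ i ∈ s, ((f i : ℝ) : EReal) :=
  map_sum (⟨⟨Real.toEReal, EReal.coe_zero⟩, EReal.coe_add⟩ : ℝ →+ EReal) f s

lemma gibbs_aux {p q : Y → ℝ} (hp : p ∈ probSimplex Y) (hq : q ∈ probSimplex Y)
    (hdom : ∀ y, q y = 0 → p y = 0) :
    (∀ y, p y * Real.log (q y / p y) ≤ q y - p y) ∧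
    Dreal p q = - ∑ y, p y * Real.log (q y / p y) ∧
    ∑ y, (q y - p y) = 0 := by
  have hterm : ∀ y, p y * Real.log (q y / p y) ≤ q y - p y := by
    intro y
    rcases eq_or_lt_of_le (hp.1 y) with h0 | hpos
    · simp [← h0, hq.1 y]
    · have hqpos : 0 < q y := by
        rcases eq_or_lt_of_le (hq.1 y) with h0 | h; · exact absurd (hdom y h0.symm) (ne_of_gt hpos)
        · exact h
      have hlog := Real.log_le_sub_one_of_pos (x := q y / p y) (by positivity)
      have := mul_le_mul_of_nonneg_left hlog (le_of_lt hpos)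
      calc p y * Real.log (q y / p y) ≤ p y * (q y / p y - 1) := this
        _ = q y - p y := by field_simp
  refine ⟨hterm, ?_, ?_⟩
  · rw [← Finset.sum_neg_distrib]
    refine Finset.sum_congr rfl fun y _ => ?_
    rcases eq_or_lt_of_le (hp.1 y) with h0 | hpos
    · simp [← h0]
    · have hqpos : 0 < q y := by
        rcases eq_or_lt_of_le (hq.1 y) with h0 | h; · exact absurd (hdom y h0.symm) (ne_of_gt hpos)
        · exact h
      rw [Real.log_div (ne_of_gt hpos) (ne_of_gt hqpos),
          Real.log_div (ne_of_gt hqpos) (ne_of_gt hpos)]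
      ring
  · rw [Finset.sum_sub_distrib, hp.2, hq.2, sub_self]

lemma Dreal_nonneg {p q : Y → ℝ} (hp : p ∈ probSimplex Y) (hq : q ∈ probSimplex Y)
    (hdom : ∀ y, q y = 0 → p y = 0) : 0 ≤ Dreal p q := by
  obtain ⟨hterm, heq, hsum⟩ := gibbs_aux hp hq hdom
  have : ∑ y, p y * Real.log (q y / p y) ≤ 0 := by
    calc ∑ y, p y * Real.log (q y / p y) ≤ ∑ y, (q y - p y) :=
          Finset.sum_le_sum fun y _ => hterm y
      _ = 0 := hsum
  rw [heq]; linarith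

lemma klDiv_nonneg {p q : Y → ℝ} (hp : p ∈ probSimplex Y) (hq : q ∈ probSimplex Y) :
    (0 : EReal) ≤ klDiv p q := by
  by_cases h : ∀ y, q y = 0 → p y = 0
  · rw [klDiv_eq_coe h]
    exact_mod_cast EReal.coe_le_coe_iff.2 (Dreal_nonneg hp hq h)
  · rw [klDiv_eq_top h]; exact le_top

lemma Dreal_eq_zero_iff {p q : Y → ℝ} (hp : p ∈ probSimplex Y) (hq : q ∈ probSimplex Y)
    (hdom : ∀ y, q y = 0 → p y = 0) (h0 : Dreal p q ≤ 0) : p = q := by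
  obtain ⟨hterm, heq, hsum⟩ := gibbs_aux hp hq hdom
  have hsum2 : ∑ y, p y * Real.log (q y / p y) = ∑ y, (q y - p y) := by
    have h1 : 0 ≤ ∑ y, p y * Real.log (q y / p y) := by rw [heq] at h0; linarith
    have h2 : ∑ y, p y * Real.log (q y / p y) ≤ ∑ y, (q y - p y) :=
      Finset.sum_le_sum fun y _ => hterm y
    rw [hsum]; linarith
  have hpt := (Finset.sum_eq_sum_iff_of_le (fun y _ => hterm y)).1 hsum2
  funext y
  have hy := hpt y (Finset.mem_univ y)
  rcases eq_or_lt_of_le (hp.1 y) with h0' | hpos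
  · rw [← h0'] at hy ⊢; simp at hy; linarith
  · have hqpos : 0 < q y := by
      rcases eq_or_lt_of_le (hq.1 y) with h0'' | h
      · exact absurd (hdom y h0''.symm) (ne_of_gt hpos)
      · exact h
    by_contra hne
    have hratio : q y / p y ≠ 1 := by
      intro h1
      exact hne (by field_simp at h1; linarith)
    have := Real.log_lt_sub_one_of_pos (x := q y / p y) (by positivity) hratio
    have h2 := mul_lt_mul_of_pos_left this hpos
    rw [mul_sub, mul_one, mul_div_cancel₀ _ (ne_of_gt hpos)] at h2
    linarith

lemma le_one_of_mem {p : Y → ℝ} (hp : p ∈ probSimplex Y) (y : Y) : p y ≤ 1 := by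
  have := Finset.single_le_sum (f := p) (fun i _ => hp.1 i) (Finset.mem_univ y)
  rw [hp.2] at this; exact this

lemma uniform_mem [Nonempty Y] : (fun _ : Y => ((Fintype.card Y : ℝ))⁻¹) ∈ probSimplex Y := by
  have hcard : (0:ℝ) < Fintype.card Y := by exact_mod_cast Fintype.card_pos
  constructor
  · intro a; positivity
  · rw [Finset.sum_const, Finset.card_univ, nsmul_eq_mul]; field_simp

lemma Dreal_le_log_card [Nonempty Y] {p : Y → ℝ} (hp : p ∈ probSimplex Y) :
    Dreal p (fun _ : Y => ((Fintype.card Y : ℝ))⁻¹) ≤ Real.log (Fintype.card Y) := by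
  have hcard : (0:ℝ) < Fintype.card Y := by exact_mod_cast Fintype.card_pos
  have h : Dreal p (fun _ : Y => ((Fintype.card Y : ℝ))⁻¹)
      ≤ ∑ y, p y * Real.log (Fintype.card Y) := by
    refine Finset.sum_le_sum fun y _ => ?_
    rcases eq_or_lt_of_le (hp.1 y) with h0 | hpos
    · simp [← h0]
    · rw [div_eq_mul_inv, inv_inv]
      refine mul_le_mul_of_nonneg_left ?_ (le_of_lt hpos)
      refine Real.log_le_log (by positivity) ?_
      calc p y * Fintype.card Y ≤ 1 * Fintype.card Y :=
            mul_le_mul_of_nonneg_right (le_one_of_mem hp y) (le_of_lt hcard)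
        _ = Fintype.card Y := one_mul _
  calc Dreal p _ ≤ ∑ y, p y * Real.log (Fintype.card Y) := h
    _ = Real.log (Fintype.card Y) := by rw [← Finset.sum_mul, hp.2, one_mul]

lemma Dreal_uniform [Nonempty Y] {p : Y → ℝ} (hp : p ∈ probSimplex Y) :
    Dreal p (fun _ : Y => ((Fintype.card Y : ℝ))⁻¹)
      = (∑ y, p y * Real.log (p y)) + Real.log (Fintype.card Y) := by
  have hcard : (0:ℝ) < Fintype.card Y := by exact_mod_cast Fintype.card_pos
  have h : ∀ y, p y * Real.log (p y / ((Fintype.card Y : ℝ))⁻¹)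
      = p y * Real.log (p y) + p y * Real.log (Fintype.card Y) := by
    intro y
    rcases eq_or_lt_of_le (hp.1 y) with h0 | hpos
    · simp [← h0]
    · rw [div_eq_mul_inv, inv_inv, Real.log_mul (ne_of_gt hpos) (ne_of_gt hcard)]; ring
  rw [Dreal]
  rw [Finset.sum_congr rfl fun y _ => h y, Finset.sum_add_distrib, ← Finset.sum_mul, hp.2,
      one_mul]

lemma neg_log_card_le [Nonempty Y] {p : Y → ℝ} (hp : p ∈ probSimplex Y) :
    - Real.log (Fintype.card Y) ≤ ∑ y, p y * Real.log (p y) := by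
  have hcard : (0:ℝ) < Fintype.card Y := by exact_mod_cast Fintype.card_pos
  have h := Dreal_nonneg hp uniform_mem (fun y h0 => absurd h0 (by positivity))
  rw [Dreal_uniform hp] at h
  linarith

lemma decomp {p q : Y → ℝ} (hp : p ∈ probSimplex Y)
    (hdom : ∀ y, q y = 0 → p y = 0) :
    Dreal p q = (∑ y, p y * Real.log (p y)) + ∑ y, p y * Real.log (q y)⁻¹ := by
  rw [Dreal, ← Finset.sum_add_distrib]
  refine Finset.sum_congr rfl fun y _ => ?_
  rcases eq_or_lt_of_le (hp.1 y) with h0 | hpos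
  · simp [← h0]
  · have hqpos : q y ≠ 0 := fun h0 => absurd (hdom y h0) (ne_of_gt hpos)
    rw [Real.log_div (ne_of_gt hpos) hqpos, Real.log_inv]; ring

lemma coercive [Nonempty Y] {p q : Y → ℝ} (hp : p ∈ probSimplex Y) (hq : q ∈ probSimplex Y)
    (hdom : ∀ y, q y = 0 → p y = 0) (y0 : Y) :
    p y0 * Real.log (q y0)⁻¹ - Real.log (Fintype.card Y) ≤ Dreal p q := by
  rw [decomp hp hdom]
  have h1 := neg_log_card_le hp
  have h2 : p y0 * Real.log (q y0)⁻¹ ≤ ∑ y, p y * Real.log (q y)⁻¹ := by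
    refine Finset.single_le_sum (f := fun y => p y * Real.log (q y)⁻¹)
      (fun y _ => ?_) (Finset.mem_univ y0)
    refine mul_nonneg (hp.1 y) ?_
    rcases eq_or_lt_of_le (hq.1 y) with h0 | hpos
    · simp [← h0]
    · rw [Real.log_inv]
      have := Real.log_nonpos (le_of_lt hpos) (le_one_of_mem hq y)
      linarith
  linarith

lemma Dreal_convex {p q1 q2 : Y → ℝ} (hp : p ∈ probSimplex Y)
    (hq1 : ∀ y, 0 < q1 y) (hq2 : ∀ y, 0 < q2 y) {a b : ℝ}
    (ha : 0 ≤ a) (hb : 0 ≤ b) (hab : a + b = 1) :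
    Dreal p (fun y => a * q1 y + b * q2 y) ≤ a * Dreal p q1 + b * Dreal p q2 := by
  rw [Dreal, Dreal, Dreal, Finset.mul_sum, Finset.mul_sum, ← Finset.sum_add_distrib]
  refine Finset.sum_le_sum fun y _ => ?_
  rcases eq_or_lt_of_le (hp.1 y) with h0 | hpos
  · simp [← h0]
  · have hm : 0 < a * q1 y + b * q2 y := by
      rcases eq_or_lt_of_le ha with h0 | hapos
      · have hb1 : b = 1 := by linarith
        rw [← h0, hb1]; simpa using hq2 y
      · have h1 : 0 < a * q1 y := mul_pos hapos (hq1 y)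
        have h2 : 0 ≤ b * q2 y := mul_nonneg hb (le_of_lt (hq2 y))
        linarith
    have hconc : a * Real.log (q1 y) + b * Real.log (q2 y)
        ≤ Real.log (a * q1 y + b * q2 y) := by
      have := strictConcaveOn_log_Ioi.concaveOn.2 (Set.mem_Ioi.2 (hq1 y))
        (Set.mem_Ioi.2 (hq2 y)) ha hb hab
      simpa [smul_eq_mul] using this
    rw [Real.log_div (ne_of_gt hpos) (ne_of_gt hm),
        Real.log_div (ne_of_gt hpos) (ne_of_gt (hq1 y)),
        Real.log_div (ne_of_gt hpos) (ne_of_gt (hq2 y))]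
    have hexpand : a * (p y * (Real.log (p y) - Real.log (q1 y)))
        + b * (p y * (Real.log (p y) - Real.log (q2 y)))
        = p y * (Real.log (p y) - (a * Real.log (q1 y) + b * Real.log (q2 y))) := by
      have hb' : b = 1 - a := by linarith
      subst hb'; ring
    rw [hexpand]
    refine mul_le_mul_of_nonneg_left ?_ (le_of_lt hpos)
    linarith

lemma Dreal_scale_le {p q q' : Y → ℝ} (hp : p ∈ probSimplex Y) (hq : ∀ y, 0 ≤ q y)
    (hdom : ∀ y, q y = 0 → p y = 0) {c : ℝ} (hc : 0 < c) (hle : ∀ y, c * q y ≤ q' y) :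
    Dreal p q' ≤ Dreal p q - Real.log c := by
  have h : ∀ y, p y * Real.log (p y / q' y)
      ≤ p y * Real.log (p y / q y) - p y * Real.log c := by
    intro y
    rcases eq_or_lt_of_le (hp.1 y) with h0 | hpos
    · simp [← h0]
    · have hqpos : 0 < q y := by
        rcases eq_or_lt_of_le (hq y) with h0 | h
        · exact absurd (hdom y h0.symm) (ne_of_gt hpos)
        · exact h
      have hq'pos : 0 < q' y := lt_of_lt_of_le (mul_pos hc hqpos) (hle y)
      have hlog : Real.log (p y / q' y) ≤ Real.log (p y / (c * q y)) := by
        refine Real.log_le_log (by positivity) ?_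
        exact div_le_div_of_nonneg_left (le_of_lt hpos) (mul_pos hc hqpos) (hle y)
      have heq : Real.log (p y / (c * q y)) = Real.log (p y / q y) - Real.log c := by
        rw [Real.log_div (ne_of_gt hpos) (by positivity),
            Real.log_mul (ne_of_gt hc) (ne_of_gt hqpos),
            Real.log_div (ne_of_gt hpos) (ne_of_gt hqpos)]
        ring
      have := mul_le_mul_of_nonneg_left (heq ▸ hlog) (le_of_lt hpos)
      linarith [this]
  calc Dreal p q' ≤ ∑ y, (p y * Real.log (p y / q y) - p y * Real.log c) :=
        Finset.sum_le_sum fun y _ => h y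
    _ = Dreal p q - Real.log c := by
        rw [Finset.sum_sub_distrib, ← Finset.sum_mul, hp.2, one_mul]; rfl

lemma identity (pbar : X → ℝ) (hpbar : ∀ x, 0 ≤ pbar x) (P : X → Y → ℝ)
    (hP : ∀ x, P x ∈ probSimplex Y) (q : Y → ℝ)
    (hq : ∀ y, (∑ x, pbar x * P x y) ≠ 0 → q y ≠ 0) :
    ∑ x, pbar x * Dreal (P x) q
      = (∑ x, pbar x * Dreal (P x) (fun y => ∑ x', pbar x' * P x' y))
        + Dreal (fun y => ∑ x', pbar x' * P x' y) q := by
  set qb : Y → ℝ := fun y => ∑ x', pbar x' * P x' y with hqb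
  have hterm : ∀ x y, pbar x * (P x y * Real.log (P x y / q y))
      = pbar x * (P x y * Real.log (P x y / qb y))
        + (pbar x * P x y) * Real.log (qb y / q y) := by
    intro x y
    rcases eq_or_lt_of_le (hpbar x) with h0 | hxpos
    · simp [← h0]
    rcases eq_or_lt_of_le ((hP x).1 y) with h0 | hypos
    · simp [← h0]
    · have hqbpos : 0 < qb y := by
        have ht : 0 < pbar x * P x y := mul_pos hxpos hypos
        have := Finset.single_le_sum (f := fun x' => pbar x' * P x' y)
          (fun x' _ => mul_nonneg (hpbar x') ((hP x').1 y)) (Finset.mem_univ x)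
        exact lt_of_lt_of_le ht this
      have hqpos : q y ≠ 0 := hq y (ne_of_gt hqbpos)
      rw [Real.log_div (ne_of_gt hypos) hqpos, Real.log_div (ne_of_gt hypos) (ne_of_gt hqbpos),
          Real.log_div (ne_of_gt hqbpos) hqpos]
      ring
  have hx : ∀ x, pbar x * Dreal (P x) q
      = pbar x * Dreal (P x) qb + ∑ y, (pbar x * P x y) * Real.log (qb y / q y) := by
    intro x
    rw [Dreal, Dreal, Finset.mul_sum, Finset.mul_sum, ← Finset.sum_add_distrib]
    exact Finset.sum_congr rfl fun y _ => hterm x y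
  rw [Finset.sum_congr rfl fun x _ => hx x, Finset.sum_add_distrib]
  congr 1
  rw [Finset.sum_comm, Dreal]
  refine Finset.sum_congr rfl fun y _ => ?_
  rw [← Finset.sum_mul]

lemma ereal_sup_coe [Nonempty X] (f : X → ℝ) :
    (⨆ x : X, ((f x : ℝ) : EReal)) = ((Finset.univ.sup' Finset.univ_nonempty f : ℝ) : EReal) := by
  apply le_antisymm
  · exact iSup_le fun x => EReal.coe_le_coe_iff.2 (Finset.le_sup' f (Finset.mem_univ x))
  · obtain ⟨x, -, hx⟩ := Finset.exists_mem_eq_sup' Finset.univ_nonempty f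
    rw [hx]; exact le_iSup (fun x => ((f x : ℝ) : EReal)) x

lemma ereal_sum_eq_top {ι : Type*} (s : Finset ι) (f : ι → EReal)
    (h0 : ∀ i ∈ s, 0 ≤ f i) {i : ι} (hi : i ∈ s) (htop : f i = ⊤) : ∑ j ∈ s, f j = ⊤ := by
  classical
  rw [← Finset.add_sum_erase s f hi, htop]
  have h : (0:EReal) ≤ ∑ j ∈ s.erase i, f j :=
    Finset.sum_nonneg fun j hj => h0 j (Finset.mem_of_mem_erase hj)
  exact EReal.top_add_of_ne_bot (fun hb => by rw [hb] at h; exact absurd h (by simp))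

lemma pointMass_mem [Nonempty X] (x : X) [DecidableEq X] :
    (fun x' => if x' = x then (1:ℝ) else 0) ∈ probSimplex X := by
  constructor
  · intro a; by_cases h : a = x <;> simp [h]
  · simp

lemma sup_simplex [Nonempty X] (a : X → EReal) (h0 : ∀ x, 0 ≤ a x) :
    (⨆ p : probSimplex X, ∑ x, (p.1 x : EReal) * a x) = ⨆ x, a x := by
  classical
  apply le_antisymm
  · refine iSup_le fun p => ?_
    by_cases htop : (⨆ x, a x) = ⊤
    · rw [htop]; exact le_top
    · have hne : ∀ x, a x ≠ ⊤ := fun x h =>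
        htop (top_le_iff.1 (h ▸ le_iSup a x))
      set r : X → ℝ := fun x => (a x).toReal with hr
      have har : ∀ x, a x = ((r x : ℝ) : EReal) := fun x =>
        (EReal.coe_toReal (hne x) (fun hb => by
          have h2 := h0 x; rw [hb] at h2; exact absurd h2 (by simp))).symm
      have hs : ∑ x, (p.1 x : EReal) * a x = ((∑ x, p.1 x * r x : ℝ) : EReal) := by
        rw [ecoe_sum]
        exact Finset.sum_congr rfl fun x _ => by rw [har x, ← EReal.coe_mul]
      rw [hs]
      obtain ⟨xm, -, hxm⟩ := Finset.exists_mem_eq_sup' Finset.univ_nonempty r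
      have hle : (∑ x, p.1 x * r x) ≤ r xm := by
        calc ∑ x, p.1 x * r x ≤ ∑ x, p.1 x * r xm := by
              refine Finset.sum_le_sum fun x _ => mul_le_mul_of_nonneg_left ?_ (p.2.1 x)
              rw [← hxm]; exact Finset.le_sup' r (Finset.mem_univ x)
          _ = r xm := by rw [← Finset.sum_mul, p.2.2, one_mul]
      calc ((∑ x, p.1 x * r x : ℝ) : EReal) ≤ ((r xm : ℝ) : EReal) := EReal.coe_le_coe_iff.2 hle
        _ = a xm := (har xm).symm
        _ ≤ ⨆ x, a x := le_iSup a xm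
  · refine iSup_le fun x => ?_
    have hmem := pointMass_mem (X := X) x
    have hx : ∑ x', (((fun x' => if x' = x then (1:ℝ) else 0) x' : ℝ) : EReal) * a x' = a x := by
      rw [Finset.sum_eq_single x]
      · simp
      · intro b _ hb; simp [hb]
      · intro h; exact absurd (Finset.mem_univ x) h
    calc a x = ∑ x', (((fun x' => if x' = x then (1:ℝ) else 0) x' : ℝ) : EReal) * a x' := hx.symm
      _ ≤ ⨆ p : probSimplex X, ∑ x', (p.1 x' : EReal) * a x' :=
          le_iSup (fun p : probSimplex X => ∑ x', (p.1 x' : EReal) * a x') ⟨_, hmem⟩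

lemma continuousOn_sup'_max {ι α : Type*} [TopologicalSpace α] {A : Set α} {f : ι → α → ℝ} :
    ∀ {s : Finset ι} (hs : s.Nonempty), (∀ i ∈ s, ContinuousOn (f i) A) →
      ContinuousOn (fun q => s.sup' hs fun i => f i q) A := by
  intro s hs
  induction hs using Finset.Nonempty.cons_induction with
  | singleton a => intro hf; simpa using hf a (Finset.mem_singleton_self a)
  | cons a s h hs ih =>
      intro hf
      have he : (fun q => (Finset.cons a s h).sup' (Finset.cons_nonempty h) fun i => f i q)
          = fun q => max (f a q) (s.sup' hs fun i => f i q) := by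
        funext q; rw [Finset.sup'_cons]
      rw [he]
      exact ContinuousOn.sup (hf a (Finset.mem_cons_self a s))
        (ih fun i hi => hf i (Finset.mem_cons.2 (Or.inr hi)))

end CapAux
set_option maxHeartbeats 1000000
/-- Saddle-point characterization of channel capacity: for a channel `P_{Y|X}` with
finite alphabets,
`sup_{P_X} inf_{Q_Y} D(P_{Y|X}‖Q_Y|P_X) = inf_{Q_Y} sup_{P_X} D(P_{Y|X}‖Q_Y|P_X)
 = inf_{Q_Y} sup_x D(P_{Y|X=x}‖Q_Y)`,
where `D(P_{Y|X}‖Q_Y|P_X) = Σ_x P_X(x) D(P_{Y|X=x}‖Q_Y)`; moreover the minimizing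
output distribution `Q_Y` (the capacity-achieving output distribution) is unique. -/
theorem capacity_saddle_point
    (X Y : Type) [Fintype X] [Fintype Y] [Nonempty X] [Nonempty Y]
    (P : X → Y → ℝ) (hP : ∀ x, P x ∈ probSimplex Y) :
    (⨆ pX : probSimplex X, ⨅ q : probSimplex Y,
        ∑ x, ((pX.1 x : EReal) * klDiv (P x) q.1)
      = ⨅ q : probSimplex Y, ⨆ pX : probSimplex X,
          ∑ x, ((pX.1 x : EReal) * klDiv (P x) q.1)) ∧
    (⨅ q : probSimplex Y, ⨆ pX : probSimplex X,
        ∑ x, ((pX.1 x : EReal) * klDiv (P x) q.1)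
      = ⨅ q : probSimplex Y, ⨆ x : X, klDiv (P x) q.1) ∧
    ∃! q : probSimplex Y,
      (⨆ x : X, klDiv (P x) q.1)
        = ⨅ q' : probSimplex Y, ⨆ x : X, klDiv (P x) q'.1 := by
  classical
  open CapAux Finset in
  -- basic quantities
  have hn : (0:ℝ) < Fintype.card Y := by exact_mod_cast Fintype.card_pos
  set L : ℝ := Real.log (Fintype.card Y) with hLdef
  have hL : 0 ≤ L := Real.log_nonneg (by exact_mod_cast Fintype.card_pos)
  set u : Y → ℝ := fun _ => ((Fintype.card Y : ℝ))⁻¹ with hudef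
  have humem : u ∈ probSimplex Y := uniform_mem
  have hupos : ∀ y, 0 < u y := fun y => by positivity
  -- minimum positive channel probability
  have hTne : (Finset.univ.filter (fun z : X × Y => P z.1 z.2 ≠ 0)).Nonempty := by
    obtain ⟨x⟩ := (inferInstance : Nonempty X)
    have : ∃ y, P x y ≠ 0 := by
      by_contra h
      push_neg at h
      have := (hP x).2
      rw [Finset.sum_congr rfl fun y _ => h y] at this
      simp at this
    obtain ⟨y, hy⟩ := this
    exact ⟨(x, y), by simp [hy]⟩
  set m : ℝ := (Finset.univ.filter (fun z : X × Y => P z.1 z.2 ≠ 0)).inf' hTne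
    (fun z => P z.1 z.2) with hmdef
  have hm : 0 < m := by
    rw [hmdef]
    rw [Finset.lt_inf'_iff]
    intro z hz
    rcases eq_or_lt_of_le ((hP z.1).1 z.2) with h0 | h
    · exact absurd h0.symm (by simpa using (Finset.mem_filter.1 hz).2)
    · exact h
  have hmle : ∀ x y, P x y ≠ 0 → m ≤ P x y := fun x y h =>
    Finset.inf'_le (fun z : X × Y => P z.1 z.2) (by simp [h] : ((x,y) : X × Y) ∈ _)
  -- δ
  set δ : ℝ := min ((Fintype.card Y : ℝ))⁻¹ (Real.exp (-(2*L+1)/m)) with hδdef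
  have hδpos : 0 < δ := lt_min (by positivity) (Real.exp_pos _)
  have hδu : δ ≤ ((Fintype.card Y : ℝ))⁻¹ := min_le_left _ _
  have hδkey : ∀ t : ℝ, 0 < t → t ≤ δ → 2*L + 1 ≤ m * Real.log t⁻¹ := by
    intro t ht htδ
    have h1 : Real.log t ≤ -(2*L+1)/m := by
      calc Real.log t ≤ Real.log (Real.exp (-(2*L+1)/m)) :=
            Real.log_le_log ht (le_trans htδ (min_le_right _ _))
        _ = -(2*L+1)/m := Real.log_exp _
    rw [Real.log_inv]
    have h2 : (2*L+1)/m ≤ -Real.log t := by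
      rw [neg_div] at h1
      linarith
    calc 2*L+1 = m * ((2*L+1)/m) := by field_simp
      _ ≤ m * (-Real.log t) := mul_le_mul_of_nonneg_left h2 (le_of_lt hm)
  -- the compact set K
  set K : Set (Y → ℝ) := {q | q ∈ probSimplex Y ∧ ∀ y, (∃ x, P x y ≠ 0) → δ ≤ q y} with hKdef
  have huK : u ∈ K := ⟨humem, fun y _ => hδu⟩
  have hKdom : ∀ q ∈ K, ∀ (x : X) (y : Y), q y = 0 → P x y = 0 := by
    intro q hq x y h0
    by_contra hne
    have := hq.2 y ⟨x, hne⟩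
    rw [h0] at this
    linarith
  -- the max function
  set F : (Y → ℝ) → ℝ :=
    fun q => Finset.univ.sup' Finset.univ_nonempty (fun x => Dreal (P x) q) with hFdef
  have hFle : ∀ (q : Y → ℝ) (x : X), Dreal (P x) q ≤ F q := fun q x =>
    Finset.le_sup' (fun x => Dreal (P x) q) (Finset.mem_univ x)
  have hFexists : ∀ q : Y → ℝ, ∃ x, F q = Dreal (P x) q := by
    intro q
    obtain ⟨x, -, hx⟩ := Finset.exists_mem_eq_sup' Finset.univ_nonempty
      (fun x => Dreal (P x) q)
    exact ⟨x, hx⟩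
  have hFu : F u ≤ L := by
    obtain ⟨x, hx⟩ := hFexists u
    rw [hx]; exact Dreal_le_log_card (hP x)
  -- continuity & compactness
  have hFcont : ContinuousOn F K := by
    refine continuousOn_sup'_max Finset.univ_nonempty fun x _ => ?_
    show ContinuousOn (fun q => ∑ y, P x y * Real.log (P x y / q y)) K
    refine continuousOn_finset_sum _ fun y _ => ?_
    by_cases hxy : P x y = 0
    · simpa [hxy] using continuousOn_const
    · have hpos : ∀ q ∈ K, 0 < q y := fun q hq => lt_of_lt_of_le hδpos (hq.2 y ⟨x, hxy⟩)
      have h1 : ContinuousOn (fun q : Y → ℝ => P x y / q y) K :=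
        ContinuousOn.div continuousOn_const ((continuous_apply y).continuousOn)
          (fun q hq => ne_of_gt (hpos q hq))
      have h2 : ContinuousOn (fun q : Y → ℝ => Real.log (P x y / q y)) K :=
        ContinuousOn.log h1 (fun q hq => div_ne_zero hxy (ne_of_gt (hpos q hq)))
      exact continuousOn_const.mul h2
  have hKcompact : IsCompact K := by
    refine IsCompact.of_isClosed_subset
      (isCompact_univ_pi fun _ : Y => isCompact_Icc (a := (0:ℝ)) (b := 1)) ?_ ?_
    · have : K = (⋂ a : Y, {q : Y → ℝ | 0 ≤ q a}) ∩
          ({q : Y → ℝ | ∑ a, q a = 1} ∩ ⋂ y : Y, {q : Y → ℝ | (∃ x, P x y ≠ 0) → δ ≤ q y}) := by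
        ext q
        simp only [hKdef, Set.mem_inter_iff, Set.mem_iInter, Set.mem_setOf_eq, probSimplex]
        tauto
      rw [this]
      refine IsClosed.inter (isClosed_iInter fun a =>
        isClosed_le continuous_const (continuous_apply a)) (IsClosed.inter ?_ ?_)
      · exact isClosed_eq (continuous_finset_sum _ fun i _ => continuous_apply i)
          continuous_const
      · refine isClosed_iInter fun y => ?_
        by_cases h : ∃ x, P x y ≠ 0
        · have : {q : Y → ℝ | (∃ x, P x y ≠ 0) → δ ≤ q y} = {q : Y → ℝ | δ ≤ q y} := by
            ext q; simp [h]
          rw [this]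
          exact isClosed_le continuous_const (continuous_apply y)
        · have : {q : Y → ℝ | (∃ x, P x y ≠ 0) → δ ≤ q y} = Set.univ := by
            ext q; simp [h]
          rw [this]; exact isClosed_univ
    · intro q hq
      rw [Set.mem_univ_pi]
      exact fun y => ⟨hq.1.1 y, le_one_of_mem hq.1 y⟩
  obtain ⟨qs, hqsK, hqsmin⟩ := hKcompact.exists_isMinOn ⟨u, huK⟩ hFcont
  set Cr : ℝ := F qs with hCrdef
  have hqsdom : ∀ (x : X) (y : Y), qs y = 0 → P x y = 0 := hKdom qs hqsK
  have hCrle : Cr ≤ L := le_trans (hqsmin huK) hFu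
  have hCr0 : 0 ≤ Cr := by
    obtain ⟨x⟩ := (inferInstance : Nonempty X)
    exact le_trans (Dreal_nonneg (hP x) hqsK.1 (fun y h => hqsdom x y h)) (hFle qs x)
  -- coercivity: any simplex q outside K that dominates has big F value
  have hglobal : ∀ q ∈ probSimplex Y, q ∉ K → (∀ (x : X) (y : Y), q y = 0 → P x y = 0) →
      L + 1 ≤ F q := by
    intro q hq hqK hdom
    have : ∃ y, (∃ x, P x y ≠ 0) ∧ q y < δ := by
      by_contra h
      push_neg at h
      exact hqK ⟨hq, fun y hy => h y hy⟩
    obtain ⟨y, ⟨x, hxy⟩, hyδ⟩ := this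
    have hqypos : 0 < q y := by
      rcases eq_or_lt_of_le (hq.1 y) with h0 | h
      · exact absurd (hdom x y h0.symm) hxy
      · exact h
    have hbig : 2*L + 1 ≤ P x y * Real.log (q y)⁻¹ := by
      have h1 := hδkey (q y) hqypos (le_of_lt hyδ)
      have hlognn : 0 ≤ Real.log (q y)⁻¹ := by
        rw [Real.log_inv]
        have hy1 : q y ≤ 1 := le_one_of_mem hq y
        have := Real.log_nonpos (le_of_lt hqypos) hy1
        linarith
      calc 2*L+1 ≤ m * Real.log (q y)⁻¹ := h1
        _ ≤ P x y * Real.log (q y)⁻¹ :=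
            mul_le_mul_of_nonneg_right (hmle x y hxy) hlognn
    have := coercive (hP x) hq (fun y' h' => hdom x y' h') y
    have hDx : L + 1 ≤ Dreal (P x) q := by
      rw [← hLdef] at this
      linarith
    exact le_trans hDx (hFle q x)
  -- EReal sup over x
  have hsupEq : ∀ q : Y → ℝ, (∀ (x : X) (y : Y), q y = 0 → P x y = 0) →
      (⨆ x : X, klDiv (P x) q) = ((F q : ℝ) : EReal) := by
    intro q hdom
    have : ∀ x : X, klDiv (P x) q = ((Dreal (P x) q : ℝ) : EReal) := fun x =>
      klDiv_eq_coe (fun y h => hdom x y h)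
    rw [iSup_congr this, ereal_sup_coe]
  have hsupTop : ∀ q : Y → ℝ, (¬ ∀ (x : X) (y : Y), q y = 0 → P x y = 0) →
      (⨆ x : X, klDiv (P x) q) = ⊤ := by
    intro q h
    push_neg at h
    obtain ⟨x, y, h0, hne⟩ := h
    have : klDiv (P x) q = ⊤ := klDiv_eq_top (by push_neg; exact ⟨y, h0, hne⟩)
    exact top_le_iff.1 (this ▸ le_iSup (fun x => klDiv (P x) q) x)
  -- lower bound for positive distributions
  have hFpos : ∀ q ∈ probSimplex Y, (∀ y, 0 < q y) → Cr ≤ F q := by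
    intro q hq hqpos
    by_cases hqK : q ∈ K
    · exact hqsmin hqK
    · have hdom : ∀ (x : X) (y : Y), q y = 0 → P x y = 0 := fun x y h0 =>
        absurd h0 (ne_of_gt (hqpos y))
      linarith [hglobal q hq hqK hdom]
  -- Hahn–Banach separation
  have hHB : ∃ pbar, pbar ∈ probSimplex X ∧
      ∀ q ∈ probSimplex Y, (∀ y, 0 < q y) → Cr ≤ ∑ x, pbar x * Dreal (P x) q := by
    set U : Set (X → ℝ) := Set.univ.pi (fun _ : X => Set.Iio Cr) with hUdef
    set T : Set (X → ℝ) :=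
      {v | ∃ q, (q ∈ probSimplex Y ∧ ∀ y, 0 < q y) ∧ ∀ x, Dreal (P x) q ≤ v x} with hTdef
    have hUopen : IsOpen U := isOpen_set_pi Set.finite_univ (fun a _ => isOpen_Iio)
    have hUconv : Convex ℝ U := convex_pi (fun i _ => convex_Iio _)
    have hUmem : ∀ (r : ℝ), r < Cr → (fun _ : X => r) ∈ U := fun r hr => by
      rw [hUdef, Set.mem_univ_pi]; exact fun i => hr
    have hTconv : Convex ℝ T := by
      intro v1 h1 v2 h2 a b ha hb hab
      obtain ⟨q1, ⟨hq1m, hq1p⟩, hv1⟩ := h1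
      obtain ⟨q2, ⟨hq2m, hq2p⟩, hv2⟩ := h2
      refine ⟨fun y => a * q1 y + b * q2 y, ⟨⟨⟨?_, ?_⟩, ?_⟩, ?_⟩⟩
      · intro y
        exact add_nonneg (mul_nonneg ha (hq1m.1 y)) (mul_nonneg hb (hq2m.1 y))
      · rw [Finset.sum_add_distrib, ← Finset.mul_sum, ← Finset.mul_sum, hq1m.2, hq2m.2,
            mul_one, mul_one, hab]
      · intro y
        show 0 < a * q1 y + b * q2 y
        rcases eq_or_lt_of_le ha with h0 | hapos
        · have hb1 : b = 1 := by linarith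
          rw [← h0, hb1]; simpa using hq2p y
        · have h1 : 0 ≤ b * q2 y := mul_nonneg hb (le_of_lt (hq2p y))
          have h2 : 0 < a * q1 y := mul_pos hapos (hq1p y)
          linarith
      · intro x
        calc Dreal (P x) (fun y => a * q1 y + b * q2 y)
            ≤ a * Dreal (P x) q1 + b * Dreal (P x) q2 :=
              Dreal_convex (hP x) hq1p hq2p ha hb hab
          _ ≤ a * v1 x + b * v2 x :=
              add_le_add (mul_le_mul_of_nonneg_left (hv1 x) ha)
                (mul_le_mul_of_nonneg_left (hv2 x) hb)
          _ = (a • v1 + b • v2) x := by simp [smul_eq_mul]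
    have hdisj : Disjoint U T := by
      rw [Set.disjoint_left]
      intro v hvU hvT
      obtain ⟨q, ⟨hqm, hqp⟩, hv⟩ := hvT
      obtain ⟨x, hx⟩ := hFexists q
      have h1 : Cr ≤ F q := hFpos q hqm hqp
      have h2 : Dreal (P x) q ≤ v x := hv x
      have h3 : v x < Cr := Set.mem_univ_pi.1 hvU x
      rw [hx] at h1
      linarith
    obtain ⟨f, c, hfU, hfT⟩ := geometric_hahn_banach_open hUconv hUopen hTconv hdisj
    set lam : X → ℝ := fun x => f (Pi.single x 1) with hlamdef
    have hsingle_eq : ∀ x : X, (fun j => if x = j then (1:ℝ) else 0) = Pi.single x 1 := by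
      intro x; funext j
      rw [Pi.single_apply]
      by_cases h : j = x
      · simp [h]
      · rw [if_neg h, if_neg (fun hxj => h hxj.symm)]
    have hf_eq : ∀ v : X → ℝ, f v = ∑ x, v x * lam x := by
      intro v
      conv_lhs => rw [pi_eq_sum_univ v]
      rw [map_sum]
      refine Finset.sum_congr rfl fun x _ => ?_
      rw [map_smul, smul_eq_mul, hsingle_eq x, hlamdef]
    have hwT : (fun x => Dreal (P x) u) ∈ T := ⟨u, ⟨humem, hupos⟩, fun x => le_refl _⟩
    set w : X → ℝ := fun x => Dreal (P x) u with hwdef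
    have hlamnn : ∀ x, 0 ≤ lam x := by
      intro x
      by_contra hneg
      push_neg at hneg
      set t : ℝ := max 0 ((f w - c + 1)/(-lam x)) with htdef
      have ht0 : 0 ≤ t := le_max_left _ _
      have hmemT : w + t • (Pi.single x 1 : X → ℝ) ∈ T := by
        refine ⟨u, ⟨humem, hupos⟩, fun x' => ?_⟩
        have hsingle : (0:ℝ) ≤ (Pi.single x (1:ℝ) : X → ℝ) x' := by
          rcases Pi.single_apply x (1:ℝ) x' with _
          by_cases h : x' = x <;> simp [Pi.single_apply, h]
        have : (0:ℝ) ≤ t * (Pi.single x (1:ℝ) : X → ℝ) x' := mul_nonneg ht0 hsingle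
        show Dreal (P x') u ≤ w x' + t * (Pi.single x (1:ℝ) : X → ℝ) x'
        rw [hwdef]
        linarith
      have hc2 := hfT _ hmemT
      rw [map_add, map_smul, smul_eq_mul] at hc2
      have htge : (f w - c + 1)/(-lam x) ≤ t := le_max_right _ _
      have hpos : 0 < -lam x := by linarith
      have hkey : f w - c + 1 ≤ t * (-lam x) := (div_le_iff₀ hpos).1 htge
      have : f (Pi.single x 1) = lam x := by rw [hlamdef]
      rw [this] at hc2
      nlinarith
    have hsumlam : 0 < ∑ x, lam x := by
      rcases eq_or_lt_of_le (Finset.sum_nonneg fun x (_ : x ∈ Finset.univ) => hlamnn x)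
        with h0 | h
      · exfalso
        have hz : ∀ x ∈ Finset.univ, lam x = 0 :=
          (Finset.sum_eq_zero_iff_of_nonneg (fun x _ => hlamnn x)).1 h0.symm
        have hfw : f w = 0 := by
          rw [hf_eq]
          exact Finset.sum_eq_zero fun x _ => by rw [hz x (Finset.mem_univ x), mul_zero]
        have hv0 : (fun _ : X => Cr - 1) ∈ U := hUmem _ (by linarith)
        have hlt := hfU _ hv0
        have hfv0 : f (fun _ : X => Cr - 1) = 0 := by
          rw [hf_eq]
          exact Finset.sum_eq_zero fun x _ => by rw [hz x (Finset.mem_univ x), mul_zero]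
        have hge := hfT w hwT
        rw [hfv0] at hlt
        rw [hfw] at hge
        linarith
      · exact h
    have hcge : Cr * ∑ x, lam x ≤ c := by
      by_contra hlt
      push_neg at hlt
      set ε : ℝ := (Cr * ∑ x, lam x - c)/(2 * ∑ x, lam x) with hεdef
      have hεpos : 0 < ε := div_pos (by linarith) (by linarith)
      have hvU : (fun _ : X => Cr - ε) ∈ U := hUmem _ (by linarith)
      have hval := hfU _ hvU
      rw [hf_eq] at hval
      have hsum : ∑ x, (Cr - ε) * lam x = (Cr - ε) * ∑ x, lam x := by
        rw [Finset.mul_sum]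
      rw [hsum] at hval
      have hkey : ε * ∑ x, lam x = (Cr * ∑ x, lam x - c)/2 := by
        rw [hεdef]; field_simp
      nlinarith
    refine ⟨fun x => lam x / ∑ x', lam x',
      ⟨fun x => div_nonneg (hlamnn x) (le_of_lt hsumlam),
        by rw [← Finset.sum_div, div_self (ne_of_gt hsumlam)]⟩, ?_⟩
    intro q hq hqp
    have hvT : (fun x => Dreal (P x) q) ∈ T := ⟨q, ⟨hq, hqp⟩, fun x => le_refl _⟩
    have h1 := hfT _ hvT
    rw [hf_eq] at h1
    have h2 : Cr * ∑ x', lam x' ≤ ∑ x, Dreal (P x) q * lam x := le_trans hcge h1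
    have h3 : ∑ x, (lam x / ∑ x', lam x') * Dreal (P x) q
        = (∑ x, Dreal (P x) q * lam x) / ∑ x', lam x' := by
      rw [Finset.sum_div]
      refine Finset.sum_congr rfl fun x _ => by ring
    rw [h3, le_div_iff₀ hsumlam]
    linarith
  obtain ⟨pbar, hpbarm, hpbar⟩ := hHB
  -- extension of the lower bound beyond positive distributions
  have hext : ∀ q ∈ probSimplex Y, (∀ x, pbar x ≠ 0 → ∀ y, q y = 0 → P x y = 0) →
      Cr ≤ ∑ x, pbar x * Dreal (P x) q := by
    intro q hq hdom
    by_contra hlt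
    push_neg at hlt
    set A := ∑ x, pbar x * Dreal (P x) q with hAdef
    set t : ℝ := (Real.exp (A - Cr) + 1)/2 with htdef
    have hexplt : Real.exp (A - Cr) < 1 := by
      rw [Real.exp_lt_one_iff]; linarith
    have ht1 : t < 1 := by rw [htdef]; linarith
    have htpos : 0 < t := by rw [htdef]; positivity
    have htexp : Real.exp (A - Cr) < t := by rw [htdef]; linarith
    set qt : Y → ℝ := fun y => t * q y + (1 - t) * u y with hqtdef
    have hqtm : qt ∈ probSimplex Y := by
      constructor
      · intro y
        exact add_nonneg (mul_nonneg (le_of_lt htpos) (hq.1 y))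
          (mul_nonneg (by linarith) (le_of_lt (hupos y)))
      · rw [hqtdef]
        simp only
        rw [Finset.sum_add_distrib, ← Finset.mul_sum, ← Finset.mul_sum, hq.2, humem.2,
            mul_one, mul_one]
        ring
    have hqtpos : ∀ y, 0 < qt y := by
      intro y
      have h1 : 0 ≤ t * q y := mul_nonneg (le_of_lt htpos) (hq.1 y)
      have h2 : 0 < (1 - t) * u y := mul_pos (by linarith) (hupos y)
      show 0 < t * q y + (1 - t) * u y
      linarith
    have hmain := hpbar qt hqtm hqtpos
    have hterm : ∀ x, pbar x * Dreal (P x) qt ≤ pbar x * (Dreal (P x) q - Real.log t) := by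
      intro x
      by_cases hx : pbar x = 0
      · rw [hx, zero_mul, zero_mul]
      · refine mul_le_mul_of_nonneg_left ?_ (hpbarm.1 x)
        refine Dreal_scale_le (hP x) hq.1 (hdom x hx) htpos fun y => ?_
        have : 0 ≤ (1 - t) * u y := mul_nonneg (by linarith) (le_of_lt (hupos y))
        show t * q y ≤ t * q y + (1 - t) * u y
        linarith
    have hsum : ∑ x, pbar x * Dreal (P x) qt ≤ A - Real.log t := by
      calc ∑ x, pbar x * Dreal (P x) qt ≤ ∑ x, pbar x * (Dreal (P x) q - Real.log t) :=
            Finset.sum_le_sum fun x _ => hterm x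
        _ = A - Real.log t := by
            rw [Finset.sum_congr rfl fun x (_ : x ∈ Finset.univ) => mul_sub (pbar x) _ _,
                Finset.sum_sub_distrib, ← Finset.sum_mul, hpbarm.2, one_mul, hAdef]
    have hlogt : A - Cr < Real.log t := by
      have := Real.exp_log htpos
      calc A - Cr = Real.log (Real.exp (A - Cr)) := (Real.log_exp _).symm
        _ < Real.log t := Real.log_lt_log (Real.exp_pos _) htexp
    linarith
  -- the capacity-achieving output distribution
  set qbar : Y → ℝ := fun y => ∑ x', pbar x' * P x' y with hqbardef
  have hqbarm : qbar ∈ probSimplex Y := by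
    constructor
    · intro y
      exact Finset.sum_nonneg fun x _ => mul_nonneg (hpbarm.1 x) ((hP x).1 y)
    · calc ∑ y, ∑ x', pbar x' * P x' y = ∑ x', ∑ y, pbar x' * P x' y := Finset.sum_comm
        _ = ∑ x', pbar x' * ∑ y, P x' y := by
            exact Finset.sum_congr rfl fun x _ => (Finset.mul_sum _ _ _).symm
        _ = 1 := by
            rw [Finset.sum_congr rfl fun x (_ : x ∈ Finset.univ) => by rw [(hP x).2, mul_one]]
            exact hpbarm.2
  have hqbardom : ∀ x, pbar x ≠ 0 → ∀ y, qbar y = 0 → P x y = 0 := by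
    intro x hx y h0
    by_contra hne
    have hterm : 0 < pbar x * P x y :=
      mul_pos (lt_of_le_of_ne (hpbarm.1 x) (Ne.symm hx))
        (lt_of_le_of_ne ((hP x).1 y) (Ne.symm hne))
    have hle := Finset.single_le_sum (f := fun x' => pbar x' * P x' y)
      (fun x' _ => mul_nonneg (hpbarm.1 x') ((hP x').1 y)) (Finset.mem_univ x)
    have hle2 : pbar x * P x y ≤ qbar y := hle
    rw [h0] at hle2
    linarith
  have hIbar : Cr ≤ ∑ x, pbar x * Dreal (P x) qbar := hext qbar hqbarm hqbardom
  -- uniqueness of the minimizer on K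
  have huniq : ∀ q ∈ K, F q ≤ Cr → q = qbar := by
    intro q hqK hFq
    have hqdom' : ∀ y, qbar y ≠ 0 → q y ≠ 0 := by
      intro y hy
      have hex : ∃ x', pbar x' * P x' y ≠ 0 := by
        by_contra h
        push_neg at h
        exact hy (Finset.sum_eq_zero fun x _ => h x)
      obtain ⟨x', hx'⟩ := hex
      have hPx' : P x' y ≠ 0 := fun h => hx' (by rw [h, mul_zero])
      exact ne_of_gt (lt_of_lt_of_le hδpos (hqK.2 y ⟨x', hPx'⟩))
    have hid := identity pbar hpbarm.1 P hP q (fun y h => hqdom' y h)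
    have hsum_le : ∑ x, pbar x * Dreal (P x) q ≤ Cr := by
      calc ∑ x, pbar x * Dreal (P x) q ≤ ∑ x, pbar x * Cr :=
            Finset.sum_le_sum fun x _ =>
              mul_le_mul_of_nonneg_left (le_trans (hFle q x) hFq) (hpbarm.1 x)
        _ = Cr := by rw [← Finset.sum_mul, hpbarm.2, one_mul]
    have hD0 : Dreal qbar q ≤ 0 := by
      rw [hid] at hsum_le
      linarith [hIbar]
    exact (Dreal_eq_zero_iff hqbarm hqK.1 (fun y h0 => by
      by_contra hne
      exact (hqdom' y hne) h0) hD0).symm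
  -- EReal conversion of weighted sums
  have hsum_coe : ∀ (p : X → ℝ) (q : Y → ℝ), (∀ x, p x ≠ 0 → ∀ y, q y = 0 → P x y = 0) →
      ∑ x, ((p x : ℝ) : EReal) * klDiv (P x) q
        = ((∑ x, p x * Dreal (P x) q : ℝ) : EReal) := by
    intro p q hdom
    rw [ecoe_sum]
    refine Finset.sum_congr rfl fun x _ => ?_
    by_cases hx : p x = 0
    · rw [hx]; simp
    · rw [klDiv_eq_coe (fun y h => hdom x hx y h), ← EReal.coe_mul]
  -- value of the inf-sup
  have hCsup_ge : ∀ q : ↥(probSimplex Y), ((Cr:ℝ) : EReal) ≤ ⨆ x : X, klDiv (P x) q.1 := by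
    intro q
    by_cases hdom : ∀ (x : X) (y : Y), q.1 y = 0 → P x y = 0
    · rw [hsupEq q.1 hdom]
      refine EReal.coe_le_coe_iff.2 ?_
      by_cases hK : q.1 ∈ K
      · exact hqsmin hK
      · linarith [hglobal q.1 q.2 hK hdom]
    · rw [hsupTop q.1 hdom]; exact le_top
  have hC' : (⨅ q' : ↥(probSimplex Y), ⨆ x : X, klDiv (P x) q'.1) = ((Cr : ℝ) : EReal) := by
    apply le_antisymm
    · exact iInf_le_of_le ⟨qs, hqsK.1⟩ (le_of_eq (hsupEq qs hqsdom))
    · exact le_iInf hCsup_ge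
  have hmemK : ∀ q : ↥(probSimplex Y), (⨆ x : X, klDiv (P x) q.1) = ((Cr:ℝ):EReal) →
      q.1 ∈ K ∧ F q.1 ≤ Cr := by
    intro q heq
    by_cases hdom : ∀ (x : X) (y : Y), q.1 y = 0 → P x y = 0
    · rw [hsupEq q.1 hdom] at heq
      have hFq : F q.1 = Cr := EReal.coe_eq_coe_iff.1 heq
      by_cases hK : q.1 ∈ K
      · exact ⟨hK, le_of_eq hFq⟩
      · exfalso
        have := hglobal q.1 q.2 hK hdom
        rw [hFq] at this
        linarith
    · rw [hsupTop q.1 hdom] at heq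
      simp at heq
  have hgoal2 : (⨅ q : ↥(probSimplex Y), ⨆ pX : ↥(probSimplex X),
      ∑ x, ((pX.1 x : EReal) * klDiv (P x) q.1))
      = ⨅ q : ↥(probSimplex Y), ⨆ x : X, klDiv (P x) q.1 :=
    iInf_congr fun q => sup_simplex (fun x => klDiv (P x) q.1)
      (fun x => klDiv_nonneg (hP x) q.2)
  refine ⟨?_, hgoal2, ?_⟩
  · rw [hgoal2, hC']
    apply le_antisymm
    · refine iSup_le fun p => ?_
      refine iInf_le_of_le ⟨qs, hqsK.1⟩ ?_
      rw [hsum_coe p.1 qs (fun x _ y h => hqsdom x y h)]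
      refine EReal.coe_le_coe_iff.2 ?_
      calc ∑ x, p.1 x * Dreal (P x) qs ≤ ∑ x, p.1 x * Cr :=
            Finset.sum_le_sum fun x _ => mul_le_mul_of_nonneg_left (hFle qs x) (p.2.1 x)
        _ = Cr := by rw [← Finset.sum_mul, p.2.2, one_mul]
    · refine le_iSup_of_le ⟨pbar, hpbarm⟩ (le_iInf fun q => ?_)
      by_cases hdom : ∀ x, pbar x ≠ 0 → ∀ y, q.1 y = 0 → P x y = 0
      · rw [hsum_coe pbar q.1 hdom]
        exact EReal.coe_le_coe_iff.2 (hext q.1 q.2 hdom)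
      · push_neg at hdom
        obtain ⟨x, hx, y, h0, hne⟩ := hdom
        have htop : ((pbar x : ℝ) : EReal) * klDiv (P x) q.1 = ⊤ := by
          rw [klDiv_eq_top (by push_neg; exact ⟨y, h0, hne⟩)]
          exact EReal.coe_mul_top_of_pos (lt_of_le_of_ne (hpbarm.1 x) (Ne.symm hx))
        rw [ereal_sum_eq_top Finset.univ _
          (fun x' _ => mul_nonneg (EReal.coe_nonneg.2 (hpbarm.1 x'))
            (klDiv_nonneg (hP x') q.2)) (Finset.mem_univ x) htop]
        exact le_top
  · refine ⟨⟨qs, hqsK.1⟩, ?_, ?_⟩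
    · rw [hC']
      exact hsupEq qs hqsdom
    · intro q' hq'
      rw [hC'] at hq'
      obtain ⟨hK', hF'⟩ := hmemK q' hq'
      have h1 : q'.1 = qbar := huniq q'.1 hK' hF'
      have h2 : qs = qbar := huniq qs hqsK (le_refl Cr)
      exact Subtype.ext (h1.trans h2.symm)
end
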